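/- arXiv:0904.1028 — 7 statements merged into one kernel-verified Lean document; each statement's English description precedes it below -/
import Mathlib

section
/- Let p be a prime, α, β ∈ ℂ ∖ {0} with α ≠ β, and s′ ∈ ℂ with |α| < p^{Re(s′)} and |β| < p^{Re(s′)}. Then the function y ↦ |y|^{s′} · W_{α,β}(y) is integrable on ℚ_pˣ with respect to ν, and ∫_{ℚ_pˣ} |y|^{s′} W_{α,β}(y) dν(y) = 1 / ((1 − α p^{−s′})(1 − β p^{−s′})). (This is the local Mellin transform of the spherical Whittaker function, equal to the local L-factor L_v(s′ + 1/2, F).) -/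
open MeasureTheory

open Classical in
/-- The spherical Whittaker function on `ℚ_p` with Satake parameters `α, β`:
`W(y) = (α^{n+1} − β^{n+1})/(α − β)` if `y ≠ 0` and `n = v_p(y) ≥ 0`, and `0` otherwise. -/
noncomputable def sphericalWhittaker (p : ℕ) [Fact p.Prime] (α β : ℂ) (y : ℚ_[p]) : ℂ :=
  if y ≠ 0 ∧ 0 ≤ y.valuation then
    (α ^ (y.valuation + 1) - β ^ (y.valuation + 1)) / (α - β)
  else 0

/-- **Local Mellin transform of the spherical Whittaker function.**
Let `ν` be a Haar measure on `ℚ_pˣ` (multiplication-invariant, vanishing at `0`, giving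
`ℤ_pˣ` mass `1`). For nonzero `α ≠ β` with `|α|, |β| < p^{Re s′}`, the function
`y ↦ |y|^{s′} W_{α,β}(y)` is `ν`-integrable and its integral is
`1/((1 − α p^{−s′})(1 − β p^{−s′}))`, the local `L`-factor `L_v(s′ + 1/2, F)`. -/
theorem stmt_1 (p : ℕ) [Fact p.Prime] [MeasurableSpace ℚ_[p]] [BorelSpace ℚ_[p]]
    (ν : Measure ℚ_[p])
    (hν_inv : ∀ a : ℚ_[p], a ≠ 0 → Measure.map (fun x => a * x) ν = ν)
    (hν_zero : ν {0} = 0)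
    (hν_units : ν {y : ℚ_[p] | ‖y‖ = 1} = 1)
    (α β : ℂ) (hα : α ≠ 0) (hβ : β ≠ 0) (hαβ : α ≠ β)
    (s' : ℂ) (hαs : ‖α‖ < (p : ℝ) ^ s'.re) (hβs : ‖β‖ < (p : ℝ) ^ s'.re) :
    Integrable (fun y : ℚ_[p] => (‖y‖ : ℂ) ^ s' * sphericalWhittaker p α β y) ν ∧
    ∫ y : ℚ_[p], (‖y‖ : ℂ) ^ s' * sphericalWhittaker p α β y ∂ν =
      1 / ((1 - α * (p : ℂ) ^ (-s')) * (1 - β * (p : ℂ) ^ (-s'))) := by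
  classical
  have hpP : p.Prime := Fact.out
  have hp : (1:ℝ) < p := by exact_mod_cast hpP.one_lt
  have hp0 : (0:ℝ) < p := lt_trans one_pos hp
  have hp1 : (p:ℝ) ≠ 1 := ne_of_gt hp
  have hαβ' : α - β ≠ 0 := sub_ne_zero.mpr hαβ
  set r : ℂ := (p : ℂ) ^ (-s') with hrdef
  set f : ℚ_[p] → ℂ := fun y => (‖y‖ : ℂ) ^ s' * sphericalWhittaker p α β y with hfdef
  -- norm of r
  have hrabs : ‖r‖ = (p:ℝ) ^ (-s'.re) := by
    rw [hrdef, show ((p:ℕ):ℂ) = (((p:ℝ)):ℂ) by norm_cast,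
      Complex.norm_cpow_eq_rpow_re_of_pos hp0]
    simp
  have hgeom : ∀ γ : ℂ, ‖γ‖ < (p:ℝ) ^ s'.re → ‖γ * r‖ < 1 := by
    intro γ hγ
    have h1 : ‖γ * r‖ = ‖γ‖ * (p:ℝ) ^ (-s'.re) := by
      rw [norm_mul, hrabs]
    rw [h1, Real.rpow_neg hp0.le, ← div_eq_mul_inv,
      div_lt_one (Real.rpow_pos_of_pos hp0 _)]
    exact hγ
  have hαr : ‖α * r‖ < 1 := hgeom α hαs
  have hβr : ‖β * r‖ < 1 := hgeom β hβs
  have h1α : 1 - α * r ≠ 0 := by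
    intro h
    rw [sub_eq_zero] at h
    rw [← h] at hαr
    simp at hαr
  have h1β : 1 - β * r ≠ 0 := by
    intro h
    rw [sub_eq_zero] at h
    rw [← h] at hβr
    simp at hβr
  -- cpow identity
  have hr_pow : ∀ n : ℕ, (((p:ℝ) ^ (-(n:ℤ)) : ℝ) : ℂ) ^ s' = r ^ n := by
    intro n
    have hbpos : (0:ℝ) < (p:ℝ) ^ (-(n:ℤ)) := zpow_pos hp0 _
    have hb : (((p:ℝ) ^ (-(n:ℤ)) : ℝ) : ℂ) ≠ 0 := by
      exact_mod_cast hbpos.ne'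
    have hpc : ((p:ℕ):ℂ) ≠ 0 := by exact_mod_cast hp0.ne'
    rw [Complex.cpow_def_of_ne_zero hb, hrdef, Complex.cpow_def_of_ne_zero hpc,
      ← Complex.exp_nat_mul]
    congr 1
    have h1 : Complex.log (((p:ℝ) ^ (-(n:ℤ)) : ℝ) : ℂ) = (((-(n:ℤ)) * Real.log p : ℝ) : ℂ) := by
      rw [← Complex.ofReal_log hbpos.le, Real.log_zpow]
      push_cast
      ring
    have h2 : Complex.log ((p:ℕ):ℂ) = ((Real.log p : ℝ) : ℂ) := by
      rw [show ((p:ℕ):ℂ) = (((p:ℝ)):ℂ) by norm_cast, ← Complex.ofReal_log hp0.le]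
    rw [h1, h2]
    push_cast
    ring
  -- shells
  set S : ℕ → Set ℚ_[p] := fun n => {y : ℚ_[p] | ‖y‖ = (p:ℝ) ^ (-(n:ℤ))} with hSdef
  have hSmeas : ∀ n, MeasurableSet (S n) := fun n =>
    measurable_norm (measurableSet_singleton ((p:ℝ) ^ (-(n:ℤ))))
  have hSdisj : Pairwise (Function.onFun Disjoint S) := by
    intro m n hmn
    rw [Function.onFun, Set.disjoint_left]
    intro y hym hyn
    apply hmn
    have h1 : (p:ℝ) ^ (-(m:ℤ)) = (p:ℝ) ^ (-(n:ℤ)) := hym.symm.trans hyn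
    have := zpow_right_injective₀ hp0 hp1 h1
    omega
  have hnormval : ∀ y : ℚ_[p], y ≠ 0 → ∀ m : ℤ, (‖y‖ = (p:ℝ) ^ (-m) ↔ y.valuation = m) := by
    intro y hy m
    rw [Padic.norm_eq_zpow_neg_valuation hy, zpow_right_inj₀ hp0 hp1, neg_inj]
  have hval : ∀ n : ℕ, ∀ y ∈ S n, y ≠ 0 ∧ y.valuation = (n:ℤ) := by
    intro n y hy
    have hy' : ‖y‖ = (p:ℝ) ^ (-(n:ℤ)) := hy
    have hy0 : y ≠ 0 := by
      intro h
      rw [h, norm_zero] at hy'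
      exact absurd hy'.symm (ne_of_gt (zpow_pos hp0 _))
    exact ⟨hy0, (hnormval y hy0 (n:ℤ)).mp hy'⟩
  -- measure of shells
  have hSν : ∀ n, ν (S n) = 1 := by
    intro n
    have hpne : ((p:ℚ_[p])) ≠ 0 := by exact_mod_cast hpP.ne_zero
    have ha : ((p:ℚ_[p]) ^ n) ≠ 0 := pow_ne_zero _ hpne
    have hmeasmul : Measurable fun x : ℚ_[p] => (p:ℚ_[p]) ^ n * x :=
      (continuous_mul_left _).measurable
    calc ν (S n) = Measure.map (fun x => (p:ℚ_[p]) ^ n * x) ν (S n) := by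
          rw [hν_inv _ ha]
      _ = ν ((fun x => (p:ℚ_[p]) ^ n * x) ⁻¹' S n) :=
          Measure.map_apply hmeasmul (hSmeas n)
      _ = ν {y : ℚ_[p] | ‖y‖ = 1} := by
          congr 1
          ext x
          simp only [Set.mem_preimage, hSdef, Set.mem_setOf_eq]
          rw [norm_mul, norm_pow, Padic.norm_p]
          have hc : (p:ℝ) ^ (-(n:ℤ)) = ((p:ℝ)⁻¹) ^ n := by
            rw [inv_pow, ← zpow_natCast, ← zpow_neg]
          have hc0 : ((p:ℝ)⁻¹) ^ n ≠ 0 := pow_ne_zero _ (inv_ne_zero hp0.ne')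
          rw [hc]
          constructor
          · intro h
            have := mul_left_cancel₀ hc0 (h.trans (mul_one _).symm)
            exact this
          · intro h
            rw [h, mul_one]
      _ = 1 := hν_units
  -- measurability of valuation and of f
  have hvmeas : Measurable (Padic.valuation : ℚ_[p] → ℤ) := by
    apply measurable_to_countable'
    intro m
    by_cases hm : m = 0
    · subst hm
      have hset : (Padic.valuation ⁻¹' {0} : Set ℚ_[p]) =
          {y : ℚ_[p] | ‖y‖ = (p:ℝ) ^ (-(0:ℤ))} ∪ {0} := by
        ext y
        simp only [Set.mem_preimage, Set.mem_singleton_iff, Set.mem_union, Set.mem_setOf_eq]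
        constructor
        · intro h
          by_cases hy : y = 0
          · right; exact hy
          · left; exact (hnormval y hy 0).mpr h
        · rintro (h | h)
          · have hy0 : y ≠ 0 := by
              intro h0
              rw [h0, norm_zero] at h
              exact absurd h.symm (ne_of_gt (zpow_pos hp0 _))
            exact (hnormval y hy0 0).mp h
          · rw [h]; exact Padic.valuation_zero
      rw [hset]
      exact ((measurable_norm (measurableSet_singleton _)).union
        (measurableSet_singleton 0))
    · have hset : (Padic.valuation ⁻¹' {m} : Set ℚ_[p]) =
          {y : ℚ_[p] | ‖y‖ = (p:ℝ) ^ (-m)} := by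
        ext y
        simp only [Set.mem_preimage, Set.mem_singleton_iff, Set.mem_setOf_eq]
        constructor
        · intro h
          have hy0 : y ≠ 0 := by
            intro h0
            rw [h0, Padic.valuation_zero] at h
            exact hm h.symm
          exact (hnormval y hy0 m).mpr h
        · intro h
          have hy0 : y ≠ 0 := by
            intro h0
            rw [h0, norm_zero] at h
            exact absurd h.symm (ne_of_gt (zpow_pos hp0 _))
          exact (hnormval y hy0 m).mp h
      rw [hset]
      exact measurable_norm (measurableSet_singleton _)
  have hfmeas : Measurable f := by
    have hrepr : f = fun y : ℚ_[p] => if y = 0 then 0 else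
        (fun m : ℤ => (((p:ℝ) ^ (-m) : ℝ) : ℂ) ^ s' *
          (if 0 ≤ m then (α ^ (m + 1) - β ^ (m + 1)) / (α - β) else 0)) y.valuation := by
      funext y
      by_cases hy : y = 0
      · subst hy
        simp [hfdef, sphericalWhittaker]
      · rw [if_neg hy]
        simp only [hfdef, sphericalWhittaker]
        rw [Padic.norm_eq_zpow_neg_valuation hy]
        by_cases hv : 0 ≤ y.valuation
        · rw [if_pos ⟨hy, hv⟩, if_pos hv]
        · rw [if_neg (by tauto), if_neg hv]
    rw [hrepr]
    apply Measurable.ite (measurableSet_singleton 0) measurable_const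
    exact Measurable.comp (g := fun m : ℤ => (((p:ℝ) ^ (-m) : ℝ) : ℂ) ^ s' *
      (if 0 ≤ m then (α ^ (m + 1) - β ^ (m + 1)) / (α - β) else 0))
      measurable_from_top hvmeas
  -- value on shells
  set c : ℕ → ℂ := fun n => (α * (α * r) ^ n - β * (β * r) ^ n) / (α - β) with hcdef
  have hfc : ∀ n : ℕ, ∀ y ∈ S n, f y = c n := by
    intro n y hy
    obtain ⟨hy0, hv⟩ := hval n y hy
    have hy' : ‖y‖ = (p:ℝ) ^ (-(n:ℤ)) := hy
    simp only [hfdef, sphericalWhittaker]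
    rw [if_pos ⟨hy0, by rw [hv]; exact Int.ofNat_nonneg n⟩, hy', hr_pow n, hv]
    have hz : ∀ γ : ℂ, γ ^ ((n:ℤ) + 1) = γ ^ (n + 1 : ℕ) := by
      intro γ
      rw [show ((n:ℤ) + 1) = ((n + 1 : ℕ) : ℤ) by push_cast; ring, zpow_natCast]
    rw [hz α, hz β, hcdef]
    field_simp
    ring
  -- support
  set U : Set ℚ_[p] := ⋃ n, S n with hUdef
  have hUmeas : MeasurableSet U := MeasurableSet.iUnion hSmeas
  have hf_supp : ∀ y ∉ U, f y = 0 := by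
    intro y hy
    by_cases hy0 : y = 0
    · subst hy0
      simp [hfdef, sphericalWhittaker]
    · have hvneg : ¬ 0 ≤ y.valuation := by
        intro hv
        apply hy
        refine Set.mem_iUnion.mpr ⟨y.valuation.toNat, ?_⟩
        show ‖y‖ = (p:ℝ) ^ (-(y.valuation.toNat : ℤ))
        rw [Int.toNat_of_nonneg hv]
        exact Padic.norm_eq_zpow_neg_valuation hy0
      simp [hfdef, sphericalWhittaker, hy0, hvneg]
  have hf_ind : f = U.indicator f := by
    funext y
    by_cases hy : y ∈ U
    · rw [Set.indicator_of_mem hy]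
    · rw [Set.indicator_of_notMem hy, hf_supp y hy]
  -- summability
  have hgeomsum : ∀ γ : ℂ, ‖γ * r‖ < 1 → Summable (fun n : ℕ => γ * (γ * r) ^ n) :=
    fun γ h => (summable_geometric_of_norm_lt_one h).mul_left γ
  have hcsum : Summable c := by
    have := ((hgeomsum α hαr).sub (hgeomsum β hβr)).mul_right (α - β)⁻¹
    simpa [hcdef, div_eq_mul_inv] using this
  have hcnorm : Summable (fun n => ‖c n‖) := summable_norm_iff.mpr hcsum
  -- integrability
  have hint : Integrable f ν := by
    refine ⟨hfmeas.aestronglyMeasurable, ?_⟩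
    show (∫⁻ y, (‖f y‖₊ : ENNReal) ∂ν) < ⊤
    have hcalc : (∫⁻ y, (‖f y‖₊ : ENNReal) ∂ν) = ∑' n, (‖c n‖₊ : ENNReal) := by
      calc (∫⁻ y, (‖f y‖₊ : ENNReal) ∂ν)
          = ∫⁻ y in U, (‖f y‖₊ : ENNReal) ∂ν := by
            rw [← lintegral_indicator hUmeas]
            congr 1
            funext y
            by_cases hy : y ∈ U
            · rw [Set.indicator_of_mem hy]
            · rw [Set.indicator_of_notMem hy, hf_supp y hy]
              simp
        _ = ∑' n, ∫⁻ y in S n, (‖f y‖₊ : ENNReal) ∂ν := lintegral_iUnion hSmeas hSdisj _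
        _ = ∑' n, (‖c n‖₊ : ENNReal) := by
            congr 1
            funext n
            rw [setLIntegral_congr_fun (hSmeas n)
              (fun y hy => by rw [hfc n y hy]), setLIntegral_const, hSν n, mul_one]
    rw [hcalc, lt_top_iff_ne_top]
    rw [ENNReal.tsum_coe_ne_top_iff_summable]
    exact NNReal.summable_coe.mp (by simpa using hcnorm)
  -- value of the integral
  have hint_val : ∫ y, f y ∂ν = ∑' n, c n := by
    calc ∫ y, f y ∂ν = ∫ y in U, f y ∂ν := by
          rw [← integral_indicator hUmeas, ← hf_ind]
      _ = ∑' n, ∫ y in S n, f y ∂ν := integral_iUnion hSmeas hSdisj hint.integrableOn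
      _ = ∑' n, c n := by
          congr 1
          funext n
          rw [setIntegral_congr_fun (hSmeas n) (fun y hy => hfc n y hy), setIntegral_const,
            measureReal_def, hSν n]
          simp
  have htsum : ∑' n, c n = 1 / ((1 - α * r) * (1 - β * r)) := by
    have h1 : ∑' n : ℕ, α * (α * r) ^ n = α * (1 - α * r)⁻¹ := by
      rw [tsum_mul_left, tsum_geometric_of_norm_lt_one hαr]
    have h2 : ∑' n : ℕ, β * (β * r) ^ n = β * (1 - β * r)⁻¹ := by
      rw [tsum_mul_left, tsum_geometric_of_norm_lt_one hβr]
    have h3 : ∑' n, c n = (α * (1 - α * r)⁻¹ - β * (1 - β * r)⁻¹) * (α - β)⁻¹ := by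
      simp only [hcdef, div_eq_mul_inv]
      rw [tsum_mul_right, Summable.tsum_sub (hgeomsum α hαr) (hgeomsum β hβr), h1, h2]
    rw [h3]
    have h1α' : 1 - r * α ≠ 0 := by rwa [mul_comm]
    have h1β' : 1 - r * β ≠ 0 := by rwa [mul_comm]
    field_simp
    ring
  exact ⟨hint, hint_val.trans htsum⟩
end

section
/- Let q > 1 be a real number, α, β ∈ ℂ ∖ {0} with α ≠ β, and s′, w′ ∈ ℂ such that |α q^{−s′}| < 1, |β q^{−s′}| < 1, |α^{−1} q^{1−w′+s′}| < 1 and |β^{−1} q^{1−w′+s′}| < 1. Then the double series ((q−1)/q) · ∑_{m=1}^∞ q^{m(1−w′)} · ∑_{n=−m}^∞ q^{−n s′} (α^{n+1} − β^{n+1})/(α − β) converges and equals (q−1) · (q^{−w′} − q^{1−2w′+2s′}/(αβ)) / ((1 − α q^{−s′})(1 − β q^{−s′})(1 − α^{−1} q^{1−w′+s′})(1 − β^{−1} q^{1−w′+s′})). -/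
open Complex

/-- The inner summand of the tail Mellin sum of spherical Whittaker values at the place `v₁`:
for outer index `m ≥ 1`, the inner variable `n = k − m` (`k ∈ ℕ`) runs over `n ≥ −m`, and the
term is `q^{−n s′} · (α^{n+1} − β^{n+1})/(α − β)`, where `q^z := exp(z log q)`. -/
noncomputable def innerMellinTerm (q : ℝ) (α β s' : ℂ) (m : ℤ) (k : ℕ) : ℂ :=
  (q : ℂ) ^ (((-((k : ℤ) - m) : ℤ) : ℂ) * s') *
    ((α ^ ((k : ℤ) - m + 1) - β ^ ((k : ℤ) - m + 1)) / (α - β))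


lemma one_sub_ne_zero_of_norm_lt_one' {x : ℂ} (hx : ‖x‖ < 1) : 1 - x ≠ 0 := by
  intro h
  rw [sub_eq_zero] at h
  rw [← h] at hx
  simp at hx

lemma innerMellinTerm_eq' (q : ℝ) (hq : 0 < q) (α β s' : ℂ) (hα : α ≠ 0) (hβ : β ≠ 0)
    (m : ℤ) (k : ℕ) :
    (q : ℂ) ^ (((-((k : ℤ) - m) : ℤ) : ℂ) * s') *
      ((α ^ ((k : ℤ) - m + 1) - β ^ ((k : ℤ) - m + 1)) / (α - β)) =
    ((α * (α * (q:ℂ) ^ (-s')) ^ (-m)) * (α * (q:ℂ) ^ (-s')) ^ k -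
     (β * (β * (q:ℂ) ^ (-s')) ^ (-m)) * (β * (q:ℂ) ^ (-s')) ^ k) / (α - β) := by
  have hQ : (q:ℂ) ≠ 0 := by exact_mod_cast hq.ne'
  have hE : (q:ℂ) ^ (-s') ≠ 0 := by
    simp [Complex.cpow_eq_zero_iff, hQ]
  have key : (q:ℂ) ^ (((-((k:ℤ) - m) : ℤ):ℂ) * s') = ((q:ℂ)^(-s'))^((k:ℤ)-m) := by
    rw [show (((-((k:ℤ)-m) : ℤ):ℂ) * s') = ((((k:ℤ)-m : ℤ):ℂ)) * (-s') by push_cast; ring,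
      Complex.cpow_int_mul]
  have gen : ∀ γ : ℂ, γ ≠ 0 → γ * (γ*(q:ℂ)^(-s'))^(-m) * (γ*(q:ℂ)^(-s'))^k
      = γ^((k:ℤ)-m+1) * ((q:ℂ)^(-s'))^((k:ℤ)-m) := by
    intro γ hγ
    rw [mul_assoc, ← zpow_natCast (γ*(q:ℂ)^(-s')) k, ← zpow_add₀ (mul_ne_zero hγ hE),
      show -m + (k:ℤ) = (k:ℤ) - m by ring, mul_zpow, zpow_add_one₀ hγ]
    ring
  rw [key, gen α hα, gen β hβ]
  ring

set_option maxHeartbeats 1000000 in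
lemma alg_aux (Q α β E F : ℂ) (hQ : Q ≠ 0) (hα : α ≠ 0) (hβ : β ≠ 0) (hαβ : α - β ≠ 0)
    (hA : 1 - α*E ≠ 0) (hB : 1 - β*E ≠ 0) (hC : α - F ≠ 0) (hD : β - F ≠ 0) :
    (Q-1)/Q * (α*(1-α*E)⁻¹/(α-β) * (α⁻¹*F*(1-α⁻¹*F)⁻¹) -
      β*(1-β*E)⁻¹/(α-β) * (β⁻¹*F*(1-β⁻¹*F)⁻¹))
    = (Q-1)*(E*F/Q - F*F/Q/(α*β)) /
      ((1-α*E)*(1-β*E)*(1-α⁻¹*F)*(1-β⁻¹*F)) := by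
  have e1 : 1 - α⁻¹*F = (α-F)/α := by field_simp
  have e2 : 1 - β⁻¹*F = (β-F)/β := by field_simp
  have t1 : α⁻¹*F*(1-α⁻¹*F)⁻¹ = F/(α-F) := by
    rw [e1, inv_div]
    field_simp
  have t2 : β⁻¹*F*(1-β⁻¹*F)⁻¹ = F/(β-F) := by
    rw [e2, inv_div]
    field_simp
  have i1 : α*(1-α*E)⁻¹ = α/(1-α*E) := by rw [div_eq_mul_inv]
  have i2 : β*(1-β*E)⁻¹ = β/(1-β*E) := by rw [div_eq_mul_inv]
  rw [t1, t2, e1, e2, i1, i2]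
  rw [div_div, div_div, div_mul_div_comm, div_mul_div_comm,
    div_sub_div _ _ (by intro h; simp_all [mul_eq_zero]) (by intro h; simp_all [mul_eq_zero]),
    div_mul_div_comm]
  rw [div_div (F*F) Q (α*β),
    div_sub_div _ _ hQ (by intro h; simp_all [mul_eq_zero]), ← mul_div_assoc]
  rw [show (1 - α * E) * (1 - β * E) * ((α - F) / α) * ((β - F) / β)
      = ((1 - α*E)*(1-β*E)*(α-F)*(β-F))/(α*β) from by
    field_simp]
  rw [div_div_div_comm,
    show (Q*(Q*(α*β)))/(α*β) = Q*Q from by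
      field_simp,
    div_div,
    div_eq_div_iff (by intro h; simp_all [mul_eq_zero]) (by intro h; simp_all [mul_eq_zero])]
  ring

set_option maxHeartbeats 1600000 in
/-- **Tail Mellin sums in the cuspidal component at `v₁`.**
For real `q > 1`, nonzero `α ≠ β` in `ℂ`, and `s′, w′ ∈ ℂ` with
`|α q^{−s′}| < 1`, `|β q^{−s′}| < 1`, `|α⁻¹ q^{1−w′+s′}| < 1`, `|β⁻¹ q^{1−w′+s′}| < 1`, the
double series `((q−1)/q) ∑_{m≥1} q^{m(1−w′)} ∑_{n≥−m} q^{−n s′} (α^{n+1} − β^{n+1})/(α − β)`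
converges and equals
`(q−1)(q^{−w′} − q^{1−2w′+2s′}/(αβ)) /
  ((1 − α q^{−s′})(1 − β q^{−s′})(1 − α⁻¹ q^{1−w′+s′})(1 − β⁻¹ q^{1−w′+s′}))`. -/
theorem stmt_2 (q : ℝ) (hq : 1 < q) (α β : ℂ) (hα : α ≠ 0) (hβ : β ≠ 0) (hαβ : α ≠ β)
    (s' w' : ℂ)
    (h1 : ‖α * (q : ℂ) ^ (-s')‖ < 1) (h2 : ‖β * (q : ℂ) ^ (-s')‖ < 1)
    (h3 : ‖α⁻¹ * (q : ℂ) ^ (1 - w' + s')‖ < 1) (h4 : ‖β⁻¹ * (q : ℂ) ^ (1 - w' + s')‖ < 1) :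
    (∀ m : ℕ, Summable (innerMellinTerm q α β s' ((m : ℤ) + 1))) ∧
    Summable (fun m : ℕ => (q : ℂ) ^ (((m : ℂ) + 1) * (1 - w')) *
      ∑' k : ℕ, innerMellinTerm q α β s' ((m : ℤ) + 1) k) ∧
    ((q : ℂ) - 1) / (q : ℂ) *
        ∑' m : ℕ, (q : ℂ) ^ (((m : ℂ) + 1) * (1 - w')) *
          ∑' k : ℕ, innerMellinTerm q α β s' ((m : ℤ) + 1) k =
      ((q : ℂ) - 1) * ((q : ℂ) ^ (-w') - (q : ℂ) ^ (1 - 2 * w' + 2 * s') / (α * β)) /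
        ((1 - α * (q : ℂ) ^ (-s')) * (1 - β * (q : ℂ) ^ (-s')) *
          (1 - α⁻¹ * (q : ℂ) ^ (1 - w' + s')) * (1 - β⁻¹ * (q : ℂ) ^ (1 - w' + s'))) := by
  have hq0 : (0:ℝ) < q := lt_trans one_pos hq
  have hQ : (q:ℂ) ≠ 0 := by exact_mod_cast hq0.ne'
  set E : ℂ := (q:ℂ) ^ (-s') with hEdef
  set F : ℂ := (q:ℂ) ^ (1 - w' + s') with hFdef
  set A : ℂ := α * E with hAdef
  set B : ℂ := β * E with hBdef
  set C : ℂ := α⁻¹ * F with hCdef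
  set D : ℂ := β⁻¹ * F with hDdef
  have hE : E ≠ 0 := by simp [hEdef, Complex.cpow_eq_zero_iff, hQ]
  have hA1 : 1 - A ≠ 0 := one_sub_ne_zero_of_norm_lt_one' h1
  have hB1 : 1 - B ≠ 0 := one_sub_ne_zero_of_norm_lt_one' h2
  have hC1 : 1 - C ≠ 0 := one_sub_ne_zero_of_norm_lt_one' h3
  have hD1 : 1 - D ≠ 0 := one_sub_ne_zero_of_norm_lt_one' h4
  have hαβ' : α - β ≠ 0 := sub_ne_zero.mpr hαβ
  -- rewrite inner term
  have hterm : ∀ (m : ℤ) (k : ℕ), innerMellinTerm q α β s' m k =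
      ((α * A ^ (-m)) * A ^ k - (β * B ^ (-m)) * B ^ k) / (α - β) := by
    intro m k
    rw [innerMellinTerm]
    exact innerMellinTerm_eq' q hq0 α β s' hα hβ m k
  -- inner summability
  have hsumA : Summable fun k : ℕ => A ^ k := summable_geometric_of_norm_lt_one h1
  have hsumB : Summable fun k : ℕ => B ^ k := summable_geometric_of_norm_lt_one h2
  have hsumC : Summable fun m : ℕ => C ^ m := summable_geometric_of_norm_lt_one h3
  have hsumD : Summable fun m : ℕ => D ^ m := summable_geometric_of_norm_lt_one h4
  have hinner : ∀ m : ℤ, Summable (innerMellinTerm q α β s' m) := by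
    intro m
    have : Summable fun k : ℕ =>
        ((α * A ^ (-m)) * A ^ k - (β * B ^ (-m)) * B ^ k) / (α - β) :=
      (((hsumA.mul_left _).sub (hsumB.mul_left _)).div_const _)
    exact this.congr fun k => (hterm m k).symm
  -- inner tsum
  have hinner_tsum : ∀ m : ℤ, ∑' k : ℕ, innerMellinTerm q α β s' m k =
      ((α * A ^ (-m)) * (1 - A)⁻¹ - (β * B ^ (-m)) * (1 - B)⁻¹) / (α - β) := by
    intro m
    rw [tsum_congr (hterm m), tsum_div_const,
      Summable.tsum_sub (hsumA.mul_left _) (hsumB.mul_left _), tsum_mul_left, tsum_mul_left,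
      tsum_geometric_of_norm_lt_one h1, tsum_geometric_of_norm_lt_one h2]
  -- outer term closed form
  have houter : ∀ m : ℕ, (q : ℂ) ^ (((m : ℂ) + 1) * (1 - w')) *
      ∑' k : ℕ, innerMellinTerm q α β s' ((m : ℤ) + 1) k =
      (α * (1 - A)⁻¹ / (α - β)) * C ^ (m + 1) -
      (β * (1 - B)⁻¹ / (α - β)) * D ^ (m + 1) := by
    intro m
    rw [hinner_tsum ((m:ℤ)+1)]
    have hTpow : (q : ℂ) ^ (((m : ℂ) + 1) * (1 - w')) = ((q:ℂ) ^ (1 - w')) ^ (m + 1) := by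
      rw [show ((m : ℂ) + 1) = ((m + 1 : ℕ) : ℂ) by push_cast; ring, Complex.cpow_nat_mul]
    have hzA : ∀ γ : ℂ, γ ≠ 0 → (γ * E) ^ (-((m:ℤ)+1)) = ((γ * E)⁻¹) ^ (m + 1) := by
      intro γ hγ
      rw [zpow_neg, show ((m:ℤ)+1) = ((m+1 : ℕ) : ℤ) by push_cast; ring, zpow_natCast,
        inv_pow]
    have hTC : (q:ℂ) ^ (1 - w') * A⁻¹ = C := by
      rw [hAdef, hCdef, hEdef, hFdef, mul_inv, Complex.cpow_neg, inv_inv,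
        Complex.cpow_add _ _ hQ]
      ring
    have hTD : (q:ℂ) ^ (1 - w') * B⁻¹ = D := by
      rw [hBdef, hDdef, hEdef, hFdef, mul_inv, Complex.cpow_neg, inv_inv,
        Complex.cpow_add _ _ hQ]
      ring
    rw [hTpow, hzA α hα, hzA β hβ]
    rw [show (((q:ℂ) ^ (1 - w')) ^ (m+1)) *
        ((α * (A⁻¹) ^ (m+1) * (1 - A)⁻¹ - β * (B⁻¹) ^ (m+1) * (1 - B)⁻¹) / (α - β)) =
        (α * (1 - A)⁻¹ / (α - β)) * ((q:ℂ) ^ (1 - w') * A⁻¹) ^ (m+1) -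
        (β * (1 - B)⁻¹ / (α - β)) * ((q:ℂ) ^ (1 - w') * B⁻¹) ^ (m+1) by
      rw [mul_pow, mul_pow]; ring]
    rw [hTC, hTD]
  -- outer summability
  have houter_sum : Summable (fun m : ℕ => (q : ℂ) ^ (((m : ℂ) + 1) * (1 - w')) *
      ∑' k : ℕ, innerMellinTerm q α β s' ((m : ℤ) + 1) k) := by
    have hCs : Summable fun m : ℕ => (α * (1 - A)⁻¹ / (α - β)) * C ^ (m + 1) := by
      have : (fun m : ℕ => (α * (1 - A)⁻¹ / (α - β)) * C ^ (m + 1)) =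
          fun m : ℕ => ((α * (1 - A)⁻¹ / (α - β)) * C) * C ^ m := by
        funext m; rw [pow_succ]; ring
      rw [this]; exact hsumC.mul_left _
    have hDs : Summable fun m : ℕ => (β * (1 - B)⁻¹ / (α - β)) * D ^ (m + 1) := by
      have : (fun m : ℕ => (β * (1 - B)⁻¹ / (α - β)) * D ^ (m + 1)) =
          fun m : ℕ => ((β * (1 - B)⁻¹ / (α - β)) * D) * D ^ m := by
        funext m; rw [pow_succ]; ring
      rw [this]; exact hsumD.mul_left _
    exact (hCs.sub hDs).congr fun m => (houter m).symm
  refine ⟨fun m => hinner _, houter_sum, ?_⟩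
  -- outer tsum
  have htsum : ∑' m : ℕ, (q : ℂ) ^ (((m : ℂ) + 1) * (1 - w')) *
      ∑' k : ℕ, innerMellinTerm q α β s' ((m : ℤ) + 1) k =
      (α * (1 - A)⁻¹ / (α - β)) * (C * (1 - C)⁻¹) -
      (β * (1 - B)⁻¹ / (α - β)) * (D * (1 - D)⁻¹) := by
    rw [tsum_congr houter]
    have e1 : (fun m : ℕ => (α * (1 - A)⁻¹ / (α - β)) * C ^ (m + 1)) =
        fun m : ℕ => ((α * (1 - A)⁻¹ / (α - β)) * C) * C ^ m := by
      funext m; rw [pow_succ]; ring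
    have e2 : (fun m : ℕ => (β * (1 - B)⁻¹ / (α - β)) * D ^ (m + 1)) =
        fun m : ℕ => ((β * (1 - B)⁻¹ / (α - β)) * D) * D ^ m := by
      funext m; rw [pow_succ]; ring
    have hCs : Summable fun m : ℕ => (α * (1 - A)⁻¹ / (α - β)) * C ^ (m + 1) := by
      rw [e1]; exact hsumC.mul_left _
    have hDs : Summable fun m : ℕ => (β * (1 - B)⁻¹ / (α - β)) * D ^ (m + 1) := by
      rw [e2]; exact hsumD.mul_left _
    rw [Summable.tsum_sub hCs hDs, e1, e2, tsum_mul_left, tsum_mul_left,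
      tsum_geometric_of_norm_lt_one h3, tsum_geometric_of_norm_lt_one h4]
    ring
  rw [htsum]
  -- final algebraic identity
  have hw : (q:ℂ) ^ (-w') = E * F / (q:ℂ) := by
    rw [eq_div_iff hQ]
    calc (q:ℂ)^(-w') * (q:ℂ) = (q:ℂ)^(-w') * (q:ℂ)^(1:ℂ) := by rw [Complex.cpow_one]
    _ = (q:ℂ)^(-w' + 1) := (Complex.cpow_add _ _ hQ).symm
    _ = (q:ℂ)^(-s' + (1 - w' + s')) := by congr 1; ring
    _ = E * F := by rw [hEdef, hFdef, Complex.cpow_add _ _ hQ]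
  have hy : (q:ℂ) ^ (1 - 2*w' + 2*s') = F * F / (q:ℂ) := by
    rw [eq_div_iff hQ]
    calc (q:ℂ)^(1 - 2*w' + 2*s') * (q:ℂ)
        = (q:ℂ)^(1 - 2*w' + 2*s') * (q:ℂ)^(1:ℂ) := by rw [Complex.cpow_one]
    _ = (q:ℂ)^(1 - 2*w' + 2*s' + 1) := (Complex.cpow_add _ _ hQ).symm
    _ = (q:ℂ)^((1 - w' + s') + (1 - w' + s')) := by congr 1; ring
    _ = F * F := by rw [hFdef, Complex.cpow_add _ _ hQ]
  rw [hw, hy]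
  have hC1' : α - F ≠ 0 := fun h => by
    rw [sub_eq_zero] at h
    exact hC1 (by rw [hCdef, ← h, inv_mul_cancel₀ hα, sub_self])
  have hD1' : β - F ≠ 0 := fun h => by
    rw [sub_eq_zero] at h
    exact hD1 (by rw [hDdef, ← h, inv_mul_cancel₀ hβ, sub_self])
  exact alg_aux (q:ℂ) α β E F hQ hα hβ hαβ' hA1 hB1 hC1' hD1'
end

section
/- Let p be a prime, ψ a standard additive character of ℚ_p, and χ a nontrivial continuous unitary character of ℤ_pˣ with conductor exponent N ≥ 1. Then for every x ∈ ℚ_p with x = 0 or v_p(x) ≠ −N, one has ∫_{ℤ_pˣ} χ(u) ψ(x u) dμ(u) = 0. -/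
open MeasureTheory
open scoped ENNReal

section AuxPadic

variable {p : ℕ} [Fact p.Prime]

private lemma padic_cover (k : ℕ) (z : ℚ_[p]) (hz : ‖z‖ ≤ 1) :
    ∃ a : ℕ, a < p ^ k ∧ ‖z - (a : ℚ_[p])‖ ≤ (p : ℝ) ^ (-(k : ℤ)) := by
  set w : ℤ_[p] := ⟨z, hz⟩ with hw
  refine ⟨w.appr k, PadicInt.appr_lt w k, ?_⟩
  have h1 : ‖w - ((w.appr k : ℕ) : ℤ_[p])‖ ≤ (p : ℝ) ^ (-(k : ℤ)) := by
    rw [PadicInt.norm_le_pow_iff_mem_span_pow]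
    exact PadicInt.appr_spec k w
  have h2 : ((w - ((w.appr k : ℕ) : ℤ_[p]) : ℤ_[p]) : ℚ_[p]) = z - ((w.appr k : ℕ) : ℚ_[p]) := by
    push_cast
    rfl
  rw [PadicInt.norm_def, h2] at h1
  exact h1

private lemma norm_add_one_iff {h y : ℚ_[p]} (hh : ‖h‖ < 1) : ‖h + y‖ = 1 ↔ ‖y‖ = 1 := by
  constructor
  · intro hy
    have hne : ‖(-h)‖ ≠ ‖h + y‖ := by rw [norm_neg, hy]; exact ne_of_lt hh
    have hmax := Padic.add_eq_max_of_ne hne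
    rw [neg_add_cancel_left, norm_neg, hy] at hmax
    rw [hmax]
    exact max_eq_right hh.le
  · intro hy
    have hne : ‖h‖ ≠ ‖y‖ := by rw [hy]; exact ne_of_lt hh
    rw [Padic.add_eq_max_of_ne hne, hy]
    exact max_eq_right hh.le

private lemma padic_mul_invariance [MeasurableSpace ℚ_[p]] [BorelSpace ℚ_[p]]
    (μ : Measure ℚ_[p])
    (hμ_inv : ∀ a : ℚ_[p], Measure.map (fun x => a + x) μ = μ)
    (hμ_int : μ {x : ℚ_[p] | ‖x‖ ≤ 1} = 1)
    (t : ℚ_[p]) (ht : ‖t‖ = 1) :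
    Measure.map (fun y => t * y) μ = μ := by
  have hp1 : (1 : ℝ) < p := by exact_mod_cast (Fact.out : p.Prime).one_lt
  have hp0 : (p : ℝ) ≠ 0 := by positivity
  have hpQ0 : (p : ℚ_[p]) ≠ 0 := by
    exact_mod_cast (Nat.cast_ne_zero (R := ℚ_[p])).mpr (Fact.out : p.Prime).ne_zero
  have hballs : ∀ n : ℤ, MeasurableSet {x : ℚ_[p] | ‖x‖ ≤ (p:ℝ) ^ n} := fun n =>
    (isClosed_le continuous_norm continuous_const).measurableSet
  have hball : MeasurableSet {x : ℚ_[p] | ‖x‖ ≤ 1} :=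
    (isClosed_le continuous_norm continuous_const).measurableSet
  have htrans : ∀ (a : ℚ_[p]) (S : Set ℚ_[p]), MeasurableSet S →
      μ ((fun y => a + y) ⁻¹' S) = μ S := by
    intro a S hSm
    conv_rhs => rw [← hμ_inv a]
    rw [Measure.map_apply (measurable_const_add a) hSm]
  have hbig : ∀ n : ℕ, μ {x : ℚ_[p] | ‖x‖ ≤ (p:ℝ) ^ (n : ℤ)} ≤ (p ^ n : ℕ) := by
    intro n
    have hcover : {x : ℚ_[p] | ‖x‖ ≤ (p:ℝ) ^ (n : ℤ)} ⊆
        ⋃ a ∈ Finset.range (p ^ n),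
          (fun y => -((a : ℚ_[p]) * (p : ℚ_[p]) ^ (-(n:ℤ))) + y) ⁻¹' {x : ℚ_[p] | ‖x‖ ≤ 1} := by
      intro z hz
      have hw : ‖z * (p : ℚ_[p]) ^ (n : ℤ)‖ ≤ 1 := by
        rw [norm_mul, Padic.norm_p_zpow]
        calc ‖z‖ * (p:ℝ) ^ (-(n:ℤ)) ≤ (p:ℝ)^(n:ℤ) * (p:ℝ)^(-(n:ℤ)) :=
          mul_le_mul_of_nonneg_right hz (by positivity)
        _ = 1 := by rw [← zpow_add₀ hp0]; simp
      obtain ⟨a, ha, hna⟩ := padic_cover n _ hw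
      refine Set.mem_iUnion₂.mpr ⟨a, Finset.mem_range.mpr ha, ?_⟩
      simp only [Set.mem_preimage, Set.mem_setOf_eq]
      have hpz : (p : ℚ_[p]) ^ (n:ℤ) * (p : ℚ_[p]) ^ (-(n:ℤ)) = 1 := by
        rw [← zpow_add₀ hpQ0]; simp
      have key : -((a : ℚ_[p]) * (p : ℚ_[p]) ^ (-(n:ℤ))) + z
          = (z * (p : ℚ_[p]) ^ (n : ℤ) - (a : ℚ_[p])) * (p : ℚ_[p]) ^ (-(n:ℤ)) := by
        calc -((a : ℚ_[p]) * (p : ℚ_[p]) ^ (-(n:ℤ))) + z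
            = z * ((p : ℚ_[p]) ^ (n:ℤ) * (p : ℚ_[p]) ^ (-(n:ℤ)))
              - (a : ℚ_[p]) * (p : ℚ_[p]) ^ (-(n:ℤ)) := by rw [hpz]; ring
          _ = (z * (p : ℚ_[p]) ^ (n : ℤ) - (a : ℚ_[p])) * (p : ℚ_[p]) ^ (-(n:ℤ)) := by ring
      rw [key, norm_mul, Padic.norm_p_zpow, neg_neg]
      calc ‖z * (p : ℚ_[p]) ^ (n : ℤ) - (a : ℚ_[p])‖ * (p:ℝ)^(n:ℤ)
          ≤ (p:ℝ)^(-(n:ℤ)) * (p:ℝ)^(n:ℤ) := mul_le_mul_of_nonneg_right hna (by positivity)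
        _ = 1 := by rw [← zpow_add₀ hp0]; simp
    calc μ {x : ℚ_[p] | ‖x‖ ≤ (p:ℝ) ^ (n : ℤ)} ≤ _ := measure_mono hcover
      _ ≤ ∑ a ∈ Finset.range (p ^ n),
            μ ((fun y => -((a : ℚ_[p]) * (p : ℚ_[p]) ^ (-(n:ℤ))) + y) ⁻¹'
              {x : ℚ_[p] | ‖x‖ ≤ 1}) := measure_biUnion_finset_le _ _
      _ = ∑ _a ∈ Finset.range (p ^ n), 1 := by
          refine Finset.sum_congr rfl fun a _ => ?_
          rw [htrans _ _ hball, hμ_int]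
      _ = (p ^ n : ℕ) := by simp
  have hsmall : ∀ n : ℕ, μ {x : ℚ_[p] | ‖x‖ ≤ (p:ℝ) ^ (-(n:ℤ))} ≠ 0 := by
    intro n h0
    have hcover : {x : ℚ_[p] | ‖x‖ ≤ 1} ⊆
        ⋃ a ∈ Finset.range (p ^ n),
          (fun y => -(a : ℚ_[p]) + y) ⁻¹' {x : ℚ_[p] | ‖x‖ ≤ (p:ℝ) ^ (-(n:ℤ))} := by
      intro z hz
      obtain ⟨a, ha, hna⟩ := padic_cover n z hz
      refine Set.mem_iUnion₂.mpr ⟨a, Finset.mem_range.mpr ha, ?_⟩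
      simp only [Set.mem_preimage, Set.mem_setOf_eq, neg_add_eq_sub]
      exact hna
    have hcontr : (1 : ℝ≥0∞) ≤ 0 := by
      calc (1:ℝ≥0∞) = μ {x : ℚ_[p] | ‖x‖ ≤ 1} := hμ_int.symm
        _ ≤ ∑ a ∈ Finset.range (p^n),
            μ ((fun y => -(a:ℚ_[p]) + y) ⁻¹' {x : ℚ_[p] | ‖x‖ ≤ (p:ℝ) ^ (-(n:ℤ))}) :=
          le_trans (measure_mono hcover) (measure_biUnion_finset_le _ _)
        _ = 0 := by
          refine Finset.sum_eq_zero fun a _ => ?_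
          rw [htrans _ _ (hballs _), h0]
    simp at hcontr
  haveI hinv : μ.IsAddLeftInvariant := ⟨hμ_inv⟩
  haveI hfc : IsFiniteMeasureOnCompacts μ := by
    constructor
    intro K hK
    obtain ⟨r, hr⟩ := hK.isBounded.subset_closedBall 0
    obtain ⟨m, hm⟩ := exists_nat_ge r
    have hmp : (r : ℝ) ≤ (p:ℝ) ^ (m : ℤ) := by
      calc r ≤ m := hm
        _ ≤ (p:ℝ)^(m:ℕ) := by exact_mod_cast (Nat.lt_pow_self (n := m) (Fact.out : p.Prime).one_lt).le
        _ = (p:ℝ)^(m:ℤ) := (zpow_natCast _ _).symm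
    have hsub : K ⊆ {x : ℚ_[p] | ‖x‖ ≤ (p:ℝ) ^ (m:ℤ)} := by
      intro y hy
      have h2 := hr hy
      simp only [Metric.mem_closedBall, dist_zero_right] at h2
      exact le_trans h2 hmp
    calc μ K ≤ μ _ := measure_mono hsub
      _ ≤ (p^m : ℕ) := hbig m
      _ < ⊤ := ENNReal.natCast_lt_top _
  haveI hop : μ.IsOpenPosMeasure := by
    refine ⟨fun U hU hne => ?_⟩
    obtain ⟨z, hz⟩ := hne
    obtain ⟨ε, hε, hballU⟩ := Metric.isOpen_iff.mp hU z hz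
    obtain ⟨m, hm⟩ := exists_nat_gt ε⁻¹
    have hmε : (p:ℝ) ^ (-(m:ℤ)) < ε := by
      have h1 : ε⁻¹ < (p:ℝ)^(m:ℤ) := by
        calc ε⁻¹ < m := hm
          _ ≤ (p:ℝ)^(m:ℕ) := by exact_mod_cast (Nat.lt_pow_self (n := m) (Fact.out : p.Prime).one_lt).le
          _ = (p:ℝ)^(m:ℤ) := (zpow_natCast _ _).symm
      rw [zpow_neg]
      exact inv_lt_of_inv_lt₀ hε h1
    have hTU : (fun y => -z + y) ⁻¹' {x : ℚ_[p] | ‖x‖ ≤ (p:ℝ)^(-(m:ℤ))} ⊆ U := by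
      intro y hy
      apply hballU
      simp only [Set.mem_preimage, Set.mem_setOf_eq] at hy
      rw [Metric.mem_ball, dist_eq_norm]
      have hyz : y - z = -z + y := by ring
      rw [hyz]
      exact lt_of_le_of_lt hy hmε
    intro h0
    apply hsmall m
    have h1 : μ ((fun y => -z + y) ⁻¹' {x : ℚ_[p] | ‖x‖ ≤ (p:ℝ)^(-(m:ℤ))}) ≤ 0 :=
      h0 ▸ measure_mono hTU
    rw [htrans _ _ (hballs _)] at h1
    exact le_antisymm h1 zero_le
  haveI hH : μ.IsAddHaarMeasure := ⟨⟩
  have ht0 : t ≠ 0 := by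
    intro h; rw [h, norm_zero] at ht; norm_num at ht
  set ν := Measure.map (fun y => t * y) μ with hν
  haveI hν_inv : ν.IsAddLeftInvariant := by
    constructor
    intro a
    rw [hν, Measure.map_map (measurable_const_add a) (measurable_const_mul t)]
    have hcomp : (fun x => a + x) ∘ (fun y => t * y)
        = (fun y => t * y) ∘ (fun x => t⁻¹ * a + x) := by
      funext y
      simp only [Function.comp_apply]
      field_simp
    rw [hcomp, ← Measure.map_map (measurable_const_mul t) (measurable_const_add _), hμ_inv]
  haveI hν_fc : IsFiniteMeasureOnCompacts ν := by
    constructor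
    intro K hK
    rw [hν, Measure.map_apply (measurable_const_mul t) hK.measurableSet]
    have himg : (fun y => t * y) ⁻¹' K = (fun y => t⁻¹ * y) '' K := by
      ext y
      simp only [Set.mem_preimage, Set.mem_image]
      constructor
      · intro h; exact ⟨t*y, h, by field_simp⟩
      · rintro ⟨w, hw, rfl⟩
        rwa [show t * (t⁻¹ * w) = w by field_simp]
    rw [himg]
    exact (hK.image (continuous_mul_left t⁻¹)).measure_lt_top
  have heq := Measure.isAddLeftInvariant_eq_smul ν μ
  have hνball : ν {x : ℚ_[p] | ‖x‖ ≤ 1} = 1 := by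
    rw [hν, Measure.map_apply (measurable_const_mul t) hball]
    have hpre : (fun y => t * y) ⁻¹' {x : ℚ_[p] | ‖x‖ ≤ 1} = {x : ℚ_[p] | ‖x‖ ≤ 1} := by
      ext y; simp [norm_mul, ht]
    rw [hpre, hμ_int]
  have hc : (ν.addHaarScalarFactor μ : ℝ≥0∞) = 1 := by
    have h2 := hνball
    rw [heq] at h2
    rw [Measure.smul_apply, hμ_int, ENNReal.smul_def, smul_eq_mul, mul_one] at h2
    exact h2
  show ν = μ
  rw [heq, ENNReal.smul_def, hc, one_smul]

end AuxPadic

/-- **Vanishing of twisted character integrals off the conductor shell.**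
Let `μ` be the additive Haar measure on `ℚ_p` with `μ(ℤ_p) = 1`, `ψ` a standard additive
character of `ℚ_p`, and `χ` a nontrivial continuous unitary character of `ℤ_pˣ` with conductor
exponent `N ≥ 1`.  Then for every `x ∈ ℚ_p` with `x = 0` or `v_p(x) ≠ −N`, one has
`∫_{ℤ_pˣ} χ(u) ψ(x u) dμ(u) = 0`. -/
theorem stmt_4 (p : ℕ) [Fact p.Prime] [MeasurableSpace ℚ_[p]] [BorelSpace ℚ_[p]]
    (μ : Measure ℚ_[p])
    (hμ_inv : ∀ a : ℚ_[p], Measure.map (fun x => a + x) μ = μ)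
    (hμ_int : μ {x : ℚ_[p] | ‖x‖ ≤ 1} = 1)
    (ψ : ℚ_[p] → ℂ) (hψ_cont : Continuous ψ)
    (hψ_add : ∀ x y : ℚ_[p], ψ (x + y) = ψ x * ψ y)
    (hψ_norm : ∀ x : ℚ_[p], ‖ψ x‖ = 1)
    (hψ_triv : ∀ x : ℚ_[p], ‖x‖ ≤ 1 → ψ x = 1)
    (hψ_nontriv : ∃ x : ℚ_[p], ‖x‖ ≤ p ∧ ψ x ≠ 1)
    (χ : ℚ_[p] → ℂ) (hχ_cont : ContinuousOn χ {x : ℚ_[p] | ‖x‖ = 1})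
    (hχ_mul : ∀ x y : ℚ_[p], ‖x‖ = 1 → ‖y‖ = 1 → χ (x * y) = χ x * χ y)
    (hχ_norm : ∀ x : ℚ_[p], ‖x‖ = 1 → ‖χ x‖ = 1)
    (hχ_nontriv : ∃ x : ℚ_[p], ‖x‖ = 1 ∧ χ x ≠ 1)
    (N : ℕ) (hN : 1 ≤ N)
    (hχ_cond : ∀ x : ℚ_[p], ‖x - 1‖ ≤ (p : ℝ) ^ (-(N : ℤ)) → χ x = 1)
    (hχ_min : ∀ M : ℕ, 1 ≤ M →
      (∀ x : ℚ_[p], ‖x - 1‖ ≤ (p : ℝ) ^ (-(M : ℤ)) → χ x = 1) → N ≤ M)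
    (x : ℚ_[p]) (hx : x = 0 ∨ x.valuation ≠ -(N : ℤ)) :
    ∫ u in {y : ℚ_[p] | ‖y‖ = 1}, χ u * ψ (x * u) ∂μ = 0 := by
  have hp1 : (1 : ℝ) < p := by exact_mod_cast (Fact.out : p.Prime).one_lt
  have hp0 : (p : ℝ) ≠ 0 := by positivity
  set S : Set ℚ_[p] := {y : ℚ_[p] | ‖y‖ = 1} with hSdef
  have hS : MeasurableSet S := (isClosed_eq continuous_norm continuous_const).measurableSet
  set f : ℚ_[p] → ℂ := fun u => χ u * ψ (x * u) with hf
  have hfm : AEStronglyMeasurable f (μ.restrict S) := by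
    apply ContinuousOn.aestronglyMeasurable _ hS
    exact hχ_cont.mul ((hψ_cont.comp (continuous_mul_left x)).continuousOn)
  have key : ∀ (φ : ℚ_[p] → ℚ_[p]) (c : ℂ), Measurable φ → Measure.map φ μ = μ →
      φ ⁻¹' S = S → (∀ u ∈ S, f (φ u) = c * f u) → c ≠ 1 →
      ∫ u in S, f u ∂μ = 0 := by
    intro φ c hφm hmap hpre hpt hc
    have h1 : Measure.map φ (μ.restrict S) = μ.restrict S := by
      conv_rhs => rw [← hmap]
      rw [Measure.restrict_map hφm hS, hpre]
    have h2 : ∫ u in S, f u ∂μ = c * ∫ u in S, f u ∂μ := by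
      conv_lhs => rw [show μ.restrict S = Measure.map φ (μ.restrict S) from h1.symm]
      rw [integral_map hφm.aemeasurable (h1.symm ▸ hfm)]
      rw [setIntegral_congr_fun hS (fun u hu => hpt u hu)]
      exact integral_const_mul c f
    have h3 : (c - 1) * ∫ u in S, f u ∂μ = 0 := by
      rw [sub_mul, one_mul, ← h2, sub_self]
    rcases mul_eq_zero.mp h3 with h4 | h4
    · exact absurd (sub_eq_zero.mp h4) hc
    · exact h4
  by_cases hcase : ‖x‖ ≤ (p : ℝ) ^ ((N:ℤ) - 1)
  · -- small x : multiplicative substitution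
    obtain ⟨t, ht1, htN, htχ⟩ :
        ∃ t : ℚ_[p], ‖t‖ = 1 ∧ ‖t - 1‖ ≤ (p:ℝ) ^ (1 - (N:ℤ)) ∧ χ t ≠ 1 := by
      rcases eq_or_lt_of_le hN with h1 | h2
      · obtain ⟨t, ht, htχ⟩ := hχ_nontriv
        refine ⟨t, ht, ?_, htχ⟩
        have he : (1 - (N:ℤ)) = 0 := by omega
        rw [he, zpow_zero]
        calc ‖t - 1‖ = ‖t + (-1 : ℚ_[p])‖ := by ring_nf
          _ ≤ max ‖t‖ ‖(-1 : ℚ_[p])‖ := Padic.nonarchimedean t (-1)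
          _ = 1 := by rw [ht, norm_neg, norm_one, max_self]
      · by_contra hcon
        push_neg at hcon
        have hMN : N ≤ N - 1 := by
          apply hχ_min (N-1) (by omega)
          intro y hy
          have hy' : ‖y - 1‖ ≤ (p:ℝ) ^ (1 - (N:ℤ)) := by
            convert hy using 2
            omega
          have hylt : ‖y - 1‖ < 1 := by
            apply lt_of_le_of_lt hy'
            calc (p:ℝ)^(1-(N:ℤ)) < (p:ℝ)^(0:ℤ) := by rw [zpow_lt_zpow_iff_right₀ hp1]; omega
              _ = 1 := zpow_zero _
          have hyn : ‖y‖ = 1 := by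
            have h3 := (norm_add_one_iff hylt).mpr norm_one
            simpa using h3
          exact hcon y hyn hy'
        omega
    apply key (fun y => t * y) (χ t) (measurable_const_mul t)
      (padic_mul_invariance μ hμ_inv hμ_int t ht1) ?_ ?_ htχ
    · ext y
      simp only [Set.mem_preimage, hSdef, Set.mem_setOf_eq, norm_mul, ht1, one_mul]
    · intro u hu
      have hu1 : ‖u‖ = 1 := hu
      have hψ1 : ψ (x * (t - 1) * u) = 1 := by
        apply hψ_triv
        rw [norm_mul, norm_mul, hu1, mul_one]
        calc ‖x‖ * ‖t - 1‖ ≤ (p:ℝ)^((N:ℤ)-1) * (p:ℝ)^(1-(N:ℤ)) :=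
            mul_le_mul hcase htN (norm_nonneg _) (by positivity)
          _ = 1 := by
            rw [← zpow_add₀ hp0, show (N:ℤ)-1+(1-(N:ℤ)) = 0 by ring, zpow_zero]
      simp only [hf]
      rw [hχ_mul t u ht1 hu1]
      rw [show x * (t * u) = x * u + x * (t - 1) * u by ring, hψ_add, hψ1, mul_one]
      ring
  · -- large x : additive substitution
    have hx0 : x ≠ 0 := by
      intro h; apply hcase; rw [h, norm_zero]; positivity
    have hval := hx.resolve_left hx0
    have hnorm : ‖x‖ = (p:ℝ) ^ (-x.valuation) := Padic.norm_eq_zpow_neg_valuation hx0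
    have hvexp : (N:ℤ) + 1 ≤ -x.valuation := by
      have h1 : (p:ℝ)^((N:ℤ)-1) < (p:ℝ)^(-x.valuation) := by
        rw [← hnorm]; exact not_le.mp hcase
      have h2 : (N:ℤ) - 1 < -x.valuation := (zpow_lt_zpow_iff_right₀ hp1).mp h1
      omega
    obtain ⟨x₀, hx₀n, hx₀ψ⟩ := hψ_nontriv
    set h : ℚ_[p] := x₀ / x with hh_def
    have hxh : x * h = x₀ := by rw [hh_def]; field_simp
    have hxlb : (p:ℝ)^((N:ℤ)+1) ≤ ‖x‖ := by
      rw [hnorm]; exact zpow_le_zpow_right₀ hp1.le hvexp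
    have hhn : ‖h‖ ≤ (p:ℝ)^(-(N:ℤ)) := by
      rw [hh_def, norm_div]
      have hxpos : (0:ℝ) < (p:ℝ)^((N:ℤ)+1) := by positivity
      have hx0p : ‖x₀‖ ≤ (p:ℝ)^(1:ℤ) := by simpa using hx₀n
      have step1 : ‖x₀‖ / ‖x‖ ≤ (p:ℝ)^(1:ℤ) / (p:ℝ)^((N:ℤ)+1) :=
        div_le_div₀ (by positivity) hx0p hxpos hxlb
      have step2 : (p:ℝ)^(1:ℤ) / (p:ℝ)^((N:ℤ)+1) = (p:ℝ)^(-(N:ℤ)) := by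
        rw [← zpow_sub₀ hp0]
        congr 1
        ring
      rw [← step2]
      exact step1
    have hpNlt : (p:ℝ)^(-(N:ℤ)) < 1 := by
      calc (p:ℝ)^(-(N:ℤ)) < (p:ℝ)^(0:ℤ) := by rw [zpow_lt_zpow_iff_right₀ hp1]; omega
        _ = 1 := zpow_zero _
    have hhlt : ‖h‖ < 1 := lt_of_le_of_lt hhn hpNlt
    apply key (fun y => h + y) (ψ x₀) (measurable_const_add h) (hμ_inv h) ?_ ?_ ?_
    · ext y
      simp only [Set.mem_preimage, hSdef, Set.mem_setOf_eq]
      exact norm_add_one_iff hhlt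
    · intro u hu
      have hu1 : ‖u‖ = 1 := hu
      have hu0 : u ≠ 0 := by
        intro he; rw [he, norm_zero] at hu1; norm_num at hu1
      have hinv_norm : ‖u⁻¹ * h‖ ≤ (p:ℝ)^(-(N:ℤ)) := by
        rw [norm_mul, norm_inv, hu1, inv_one, one_mul]; exact hhn
      have hsplit : h + u = u * (1 + u⁻¹ * h) := by
        field_simp
        ring
      have hone : ‖1 + u⁻¹ * h‖ = 1 := by
        rw [add_comm]
        exact (norm_add_one_iff (lt_of_le_of_lt hinv_norm hpNlt)).mpr norm_one
      have hχ1 : χ (1 + u⁻¹ * h) = 1 := by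
        apply hχ_cond
        simpa using hinv_norm
      simp only [hf]
      rw [hsplit, hχ_mul u _ hu1 hone, hχ1, mul_one]
      rw [show x * (u * (1 + u⁻¹ * h)) = x * h + x * u by field_simp; ring, hψ_add, hxh]
      ring
    · exact hx₀ψ
end

section
/- (Lemma 6.3, abstract form.) Let δ₀ > 0 and let g : ℝ → ℂ belong to L¹(ℝ) ∩ L²(ℝ). Define E_g : (0, ∞) → ℂ by E_g(y) = (1/(2π)) ∫_ℝ g(η) · y^{δ₀ + iη} dη. Then for every x > 0, ∫_0^x |E_g(t)|² dt ≤ (1/(2π)) (∫_ℝ |g(η)|² dη) · x^{2δ₀ + 1}. -/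
open MeasureTheory Real

section Aux
open MeasureTheory Real Complex ComplexConjugate
open scoped ENNReal

noncomputable def gK (ε s : ℝ) : ℝ := Real.sqrt (π/ε) * Real.exp (-s^2/(4*ε))

lemma gK_nonneg (ε s : ℝ) : 0 ≤ gK ε s := mul_nonneg (Real.sqrt_nonneg _) (Real.exp_nonneg _)

lemma gK_even (ε s : ℝ) : gK ε (-s) = gK ε s := by simp [gK, neg_sq]

variable {g : ℝ → ℂ}

lemma Fu_bound' (g : ℝ → ℂ) (u : ℝ) : ‖∫ η : ℝ, g η * Complex.exp ((η:ℂ) * u * Complex.I)‖ ≤ ∫ η, ‖g η‖ := by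
  refine le_trans (norm_integral_le_integral_norm _) (le_of_eq ?_)
  congr 1; funext η
  rw [norm_mul]
  have : ‖Complex.exp ((η:ℂ) * u * Complex.I)‖ = 1 := by
    rw [Complex.norm_exp]; simp [mul_comm]
  rw [this, mul_one]

lemma gsq_integrable (hg2 : MemLp g 2 (volume : Measure ℝ)) :
    Integrable (fun η => ‖g η‖^2) := by
  have h := hg2.integrable_norm_rpow two_ne_zero ENNReal.ofNat_ne_top
  refine h.congr (Filter.Eventually.of_forall fun η => ?_)
  show ‖g η‖ ^ ((2:ℝ≥0∞)).toReal = ‖g η‖^2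
  rw [show ((2:ℝ≥0∞)).toReal = ((2:ℕ):ℝ) by simp, Real.rpow_natCast]

lemma gK_cont (ε : ℝ) : Continuous (gK ε) := by
  unfold gK; fun_prop

lemma A_int {ε : ℝ} (hε : 0 < ε) (hg2 : MemLp g 2 (volume : Measure ℝ))
    (hKi : Integrable (gK ε)) (hKint : ∫ s : ℝ, gK ε s = 2*π)
    (hKnn : ∀ s, 0 ≤ gK ε s) :
    Integrable (fun p : ℝ × ℝ => ‖g p.1‖^2 * gK ε (p.1 - p.2))
      ((volume : Measure ℝ).prod volume) ∧
    ∫ p : ℝ × ℝ, ‖g p.1‖^2 * gK ε (p.1 - p.2) ∂((volume : Measure ℝ).prod volume)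
      = 2*π * ∫ η, ‖g η‖^2 := by
  have hsq := gsq_integrable hg2
  have haesm : AEStronglyMeasurable (fun p : ℝ × ℝ => ‖g p.1‖^2 * gK ε (p.1 - p.2))
      ((volume : Measure ℝ).prod volume) :=
    hsq.1.comp_fst.mul ((gK_cont ε).comp (continuous_fst.sub continuous_snd)).aestronglyMeasurable
  have hinner : ∀ η : ℝ, Integrable (fun ξ => ‖g η‖^2 * gK ε (η - ξ)) := by
    intro η
    exact ((integrable_comp_sub_left (gK ε) η).2 hKi).const_mul _
  have hinnerval : ∀ η : ℝ, (∫ ξ, ‖g η‖^2 * gK ε (η - ξ)) = ‖g η‖^2 * (2*π) := by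
    intro η
    rw [integral_const_mul, integral_sub_left_eq_self (gK ε) volume η, hKint]
  have hint : Integrable (fun p : ℝ × ℝ => ‖g p.1‖^2 * gK ε (p.1 - p.2))
      ((volume : Measure ℝ).prod volume) := by
    rw [integrable_prod_iff haesm]
    constructor
    · exact Filter.Eventually.of_forall fun η => hinner η
    · refine ((hsq.mul_const (2*π)).congr (Filter.Eventually.of_forall fun η => ?_))
      show ‖g η‖^2*(2*π) = ∫ ξ, ‖‖g η‖^2 * gK ε (η - ξ)‖
      rw [← hinnerval η]
      congr 1; funext ξ
      rw [Real.norm_of_nonneg (mul_nonneg (sq_nonneg _) (hKnn _))]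
  refine ⟨hint, ?_⟩
  rw [integral_prod _ hint]
  simp_rw [hinnerval]
  rw [integral_mul_const, mul_comm]

open ComplexConjugate

noncomputable def Fu (g : ℝ → ℂ) (u : ℝ) : ℂ := ∫ η : ℝ, g η * Complex.exp ((η:ℂ) * u * Complex.I)

lemma gK_integrable' {ε : ℝ} (hε : 0 < ε) : Integrable (gK ε) := by
  have : Integrable (fun s : ℝ => Real.exp (-(1/(4*ε)) * s^2)) :=
    integrable_exp_neg_mul_sq (by positivity)
  have h := this.const_mul (Real.sqrt (π/ε))
  refine h.congr (Filter.Eventually.of_forall fun s => ?_)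
  simp only [gK]; ring_nf

lemma gauss_bound {ε : ℝ} (hε : 0 < ε) (hg1 : Integrable g)
    (hg2 : MemLp g 2 (volume : Measure ℝ))
    (hKi : Integrable (gK ε)) (hKint : ∫ s : ℝ, gK ε s = 2*π)
    (hKnn : ∀ s, 0 ≤ gK ε s)
    (hgauss : ∀ s : ℝ, ∫ u : ℝ, Complex.exp (Complex.I*s*u - ε*u^2) = (gK ε s : ℂ))
    (hFc : Continuous (Fu g)) :
    ∫ u : ℝ, Real.exp (-ε*u^2) * ‖Fu g u‖^2 ≤ 2*π * ∫ η, ‖g η‖^2 := by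
  set μ2 := (volume : Measure ℝ).prod (volume : Measure ℝ) with hμ2
  -- pointwise identity
  have hFconj : ∀ u : ℝ, (Real.exp (-ε*u^2) : ℂ) * (Fu g u * conj (Fu g u))
      = ∫ p : ℝ × ℝ, g p.1 * conj (g p.2)
          * Complex.exp (Complex.I*((p.1:ℂ)-(p.2:ℂ))*(u:ℂ) - (ε:ℂ)*(u:ℂ)^2) ∂μ2 := by
    intro u
    have h1 : conj (Fu g u) = ∫ ξ, conj (g ξ * Complex.exp ((ξ:ℂ)*u*Complex.I)) :=
      (integral_conj).symm
    rw [h1, Fu, ← integral_prod_mul, ← integral_const_mul]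
    congr 1; funext p
    simp only [map_mul, ← Complex.exp_conj, Complex.conj_I, Complex.conj_ofReal,
      Complex.ofReal_exp]
    rw [show Complex.I*((p.1:ℂ)-(p.2:ℂ))*(u:ℂ) - (ε:ℂ)*(u:ℂ)^2
        = ((p.1:ℂ)*u*Complex.I) + ((p.2:ℂ)*u*(-Complex.I)) + (((-ε*u^2 : ℝ)):ℂ) by
          push_cast; ring,
      Complex.exp_add, Complex.exp_add]
    push_cast
    ring
  -- integrability on ℝ × (ℝ × ℝ)
  have hswap : Integrable (Function.uncurry fun (u : ℝ) (p : ℝ × ℝ) =>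
      g p.1 * conj (g p.2)
        * Complex.exp (Complex.I*((p.1:ℂ)-(p.2:ℂ))*(u:ℂ) - (ε:ℂ)*(u:ℂ)^2))
      ((volume : Measure ℝ).prod μ2) := by
    have haesm : AEStronglyMeasurable (Function.uncurry fun (u : ℝ) (p : ℝ × ℝ) =>
        g p.1 * conj (g p.2)
          * Complex.exp (Complex.I*((p.1:ℂ)-(p.2:ℂ))*(u:ℂ) - (ε:ℂ)*(u:ℂ)^2))
        ((volume : Measure ℝ).prod μ2) := by
      refine ((hg1.1.comp_fst.comp_snd).mul ?_).mul ?_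
      · exact Complex.continuous_conj.comp_aestronglyMeasurable (hg1.1.comp_snd.comp_snd)
      · exact (Complex.continuous_exp.comp (by fun_prop)).aestronglyMeasurable
    refine Integrable.mono'
      ((integrable_exp_neg_mul_sq hε).mul_prod (hg1.norm.mul_prod hg1.norm))
      haesm (Filter.Eventually.of_forall fun z => ?_)
    have hexp : ‖Complex.exp (Complex.I*((z.2.1:ℂ)-(z.2.2:ℂ))*(z.1:ℂ) - (ε:ℂ)*(z.1:ℂ)^2)‖
        = Real.exp (-ε*z.1^2) := by
      rw [show Complex.I*((z.2.1:ℂ)-(z.2.2:ℂ))*(z.1:ℂ) - (ε:ℂ)*(z.1:ℂ)^2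
          = (((-ε*z.1^2 : ℝ)):ℂ) + (((z.2.1-z.2.2)*z.1 : ℝ):ℂ) * Complex.I by push_cast; ring,
        Complex.exp_add, norm_mul,
        Complex.norm_exp_ofReal, Complex.norm_exp_ofReal_mul_I, mul_one]
    simp only [Function.uncurry, norm_mul, hexp, RCLike.norm_conj]
    exact le_of_eq (by ring)
  -- rewrite J after swap
  have hinner : ∀ p : ℝ × ℝ, (∫ u : ℝ, g p.1 * conj (g p.2)
      * Complex.exp (Complex.I*((p.1:ℂ)-(p.2:ℂ))*(u:ℂ) - (ε:ℂ)*(u:ℂ)^2))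
      = g p.1 * conj (g p.2) * (gK ε (p.1-p.2) : ℂ) := by
    intro p
    have hc : ∀ u : ℝ, Complex.I*((p.1:ℂ)-(p.2:ℂ))*(u:ℂ) - (ε:ℂ)*(u:ℂ)^2
        = Complex.I*(((p.1-p.2 : ℝ)):ℂ)*(u:ℂ) - (ε:ℂ)*(u:ℂ)^2 := by
      intro u; push_cast; ring
    simp_rw [hc]
    rw [integral_const_mul, hgauss (p.1-p.2)]
  have hJ : (∫ u : ℝ, (Real.exp (-ε*u^2) : ℂ) * (Fu g u * conj (Fu g u)))
      = ∫ p : ℝ × ℝ, g p.1 * conj (g p.2) * (gK ε (p.1-p.2) : ℂ) ∂μ2 := by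
    simp_rw [hFconj]
    rw [integral_integral_swap hswap]
    simp_rw [hinner]
  -- integrability of the real integrand
  have hFint : Integrable (fun u : ℝ => Real.exp (-ε*u^2) * ‖Fu g u‖^2) := by
    refine Integrable.mono' ((integrable_exp_neg_mul_sq hε).const_mul ((∫ η, ‖g η‖)^2))
      ?_ (Filter.Eventually.of_forall fun u => ?_)
    · exact ((Real.continuous_exp.comp (by fun_prop)).mul
        ((hFc.norm.pow 2))).aestronglyMeasurable
    · rw [Real.norm_of_nonneg (by positivity)]
      calc Real.exp (-ε*u^2) * ‖Fu g u‖^2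
          ≤ Real.exp (-ε*u^2) * (∫ η, ‖g η‖)^2 :=
            mul_le_mul_of_nonneg_left
              (pow_le_pow_left₀ (norm_nonneg _) (Fu_bound' g u) 2) (Real.exp_nonneg _)
        _ = (∫ η, ‖g η‖)^2 * Real.exp (-ε*u^2) := by ring
  have hptw : ∀ u : ℝ, (Real.exp (-ε*u^2) : ℂ) * (Fu g u * conj (Fu g u))
      = ((Real.exp (-ε*u^2) * ‖Fu g u‖^2 : ℝ) : ℂ) := fun u => by
    rw [Complex.mul_conj, Complex.normSq_eq_norm_sq]
    push_cast; ring
  -- bound ‖J‖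
  have hA := A_int hε hg2 hKi hKint hKnn
  have hBint : Integrable (fun p : ℝ×ℝ => ‖g p.2‖^2 * gK ε (p.1-p.2)) μ2 := by
    refine hA.1.swap.congr (Filter.Eventually.of_forall fun p => ?_)
    show ‖g p.2‖^2 * gK ε (p.2-p.1) = _
    rw [show p.2 - p.1 = -(p.1-p.2) by ring, gK_even]
  have hBval : ∫ p : ℝ×ℝ, ‖g p.2‖^2 * gK ε (p.1-p.2) ∂μ2 = 2*π * ∫ η, ‖g η‖^2 := by
    rw [← hA.2, ← integral_prod_swap (fun p : ℝ×ℝ => ‖g p.1‖^2 * gK ε (p.1 - p.2))]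
    congr 1; funext p
    show ‖g p.2‖^2 * gK ε (p.1-p.2) = ‖g p.2‖^2 * gK ε (p.2-p.1)
    rw [show p.2 - p.1 = -(p.1-p.2) by ring, gK_even]
  have hnormle : ‖∫ p : ℝ × ℝ, g p.1 * conj (g p.2) * (gK ε (p.1-p.2) : ℂ) ∂μ2‖
      ≤ 2*π * ∫ η, ‖g η‖^2 := by
    refine le_trans (norm_integral_le_integral_norm _) ?_
    have heq : ∀ p : ℝ × ℝ, ‖g p.1 * conj (g p.2) * (gK ε (p.1-p.2) : ℂ)‖
        = ‖g p.1‖ * ‖g p.2‖ * gK ε (p.1-p.2) := by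
      intro p
      rw [norm_mul, norm_mul, RCLike.norm_conj, Complex.norm_real,
        Real.norm_of_nonneg (hKnn _)]
    simp_rw [heq]
    have hmono : ∫ p : ℝ×ℝ, ‖g p.1‖ * ‖g p.2‖ * gK ε (p.1-p.2) ∂μ2
        ≤ ∫ p : ℝ×ℝ, (‖g p.1‖^2 * gK ε (p.1-p.2) + ‖g p.2‖^2 * gK ε (p.1-p.2))/2 ∂μ2 := by
      refine integral_mono_of_nonneg (Filter.Eventually.of_forall fun p =>
        mul_nonneg (mul_nonneg (norm_nonneg _) (norm_nonneg _)) (hKnn _))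
        ((hA.1.add hBint).div_const 2) (Filter.Eventually.of_forall fun p => ?_)
      have h1 := mul_nonneg (sq_nonneg (‖g p.1‖ - ‖g p.2‖)) (hKnn (p.1-p.2))
      show ‖g p.1‖ * ‖g p.2‖ * gK ε (p.1-p.2) ≤ _
      nlinarith
    refine hmono.trans (le_of_eq ?_)
    rw [integral_div, integral_add hA.1 hBint, hA.2, hBval]
    ring
  -- conclude
  have hfin : ∫ u : ℝ, Real.exp (-ε*u^2) * ‖Fu g u‖^2
      = (∫ u : ℝ, (Real.exp (-ε*u^2) : ℂ) * (Fu g u * conj (Fu g u))).re := by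
    simp_rw [hptw]
    rw [show (∫ u : ℝ, ((Real.exp (-ε*u^2) * ‖Fu g u‖^2 : ℝ) : ℂ))
        = ((∫ u : ℝ, Real.exp (-ε*u^2) * ‖Fu g u‖^2 : ℝ) : ℂ) from integral_ofReal,
      Complex.ofReal_re]
  rw [hfin, hJ]
  exact (Complex.re_le_norm _).trans hnormle

lemma gK_integral {ε : ℝ} (hε : 0 < ε) : ∫ s : ℝ, gK ε s = 2*π := by
  have h1 : ∫ s : ℝ, Real.exp (-(1/(4*ε)) * s^2) = Real.sqrt (π / (1/(4*ε))) :=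
    integral_gaussian _
  have : ∫ s : ℝ, gK ε s = Real.sqrt (π/ε) * ∫ s : ℝ, Real.exp (-(1/(4*ε)) * s^2) := by
    rw [← integral_const_mul]
    congr 1; funext s; simp only [gK]; ring_nf
  rw [this, h1, ← Real.sqrt_mul (by positivity)]
  have : π/ε * (π / (1/(4*ε))) = (2*π)^2 := by field_simp; ring
  rw [this, Real.sqrt_sq (by positivity)]

lemma gauss_fourier {ε : ℝ} (hε : 0 < ε) (s : ℝ) :
    ∫ u : ℝ, Complex.exp (Complex.I*s*u - ε*u^2) = (gK ε s : ℂ) := by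
  have h := fourierIntegral_gaussian (b := (ε : ℂ)) (by simpa using hε) (s : ℂ)
  have h2 : ∀ u : ℝ, Complex.exp (Complex.I*s*u - ε*u^2)
      = Complex.exp (Complex.I*s*u) * Complex.exp (-ε*u^2) := by
    intro u; rw [← Complex.exp_add]; ring_nf
  simp_rw [h2]
  rw [h]
  have hπε : (0:ℝ) ≤ π/ε := by positivity
  rw [show ((π:ℂ)/(ε:ℂ)) = ((π/ε : ℝ) : ℂ) by push_cast; ring,
    show ((1:ℂ)/2 : ℂ) = ((1/2 : ℝ) : ℂ) by norm_num,
    ← Complex.ofReal_cpow hπε]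
  have : -(s:ℂ)^2/(4*ε) = ((-s^2/(4*ε) : ℝ) : ℂ) := by push_cast; ring
  rw [this, ← Complex.ofReal_exp]
  simp only [gK]
  rw [← Real.sqrt_eq_rpow]
  push_cast
  ring

lemma Fu_cont (hg1 : Integrable g) : Continuous (Fu g) := by
  apply MeasureTheory.continuous_of_dominated (bound := fun η => ‖g η‖)
  · intro u
    exact hg1.1.mul ((Complex.continuous_exp.comp (by fun_prop)).aestronglyMeasurable)
  · intro u
    refine Filter.Eventually.of_forall fun η => ?_
    rw [norm_mul]
    have : ‖Complex.exp ((η:ℂ) * u * Complex.I)‖ = 1 := by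
      rw [Complex.norm_exp]
      simp [mul_comm]
    rw [this, mul_one]
  · exact hg1.norm
  · exact Filter.Eventually.of_forall fun η => by fun_prop

lemma gaussF_int {ε : ℝ} (hε : 0 < ε) (hg1 : Integrable g) (hFc : Continuous (Fu g)) :
    Integrable (fun u : ℝ => Real.exp (-ε*u^2) * ‖Fu g u‖^2) := by
  refine Integrable.mono' ((integrable_exp_neg_mul_sq hε).const_mul ((∫ η, ‖g η‖)^2))
    ?_ (Filter.Eventually.of_forall fun u => ?_)
  · exact ((Real.continuous_exp.comp (by fun_prop)).mul ((hFc.norm.pow 2))).aestronglyMeasurable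
  · rw [Real.norm_of_nonneg (by positivity)]
    calc Real.exp (-ε*u^2) * ‖Fu g u‖^2
        ≤ Real.exp (-ε*u^2) * (∫ η, ‖g η‖)^2 :=
          mul_le_mul_of_nonneg_left
            (pow_le_pow_left₀ (norm_nonneg _) (Fu_bound' g u) 2) (Real.exp_nonneg _)
      _ = (∫ η, ‖g η‖)^2 * Real.exp (-ε*u^2) := by ring

lemma Q_bound {a L : ℝ} (ha : 0 < a) (hg1 : Integrable g)
    (hg2 : MemLp g 2 (volume : Measure ℝ)) (hFc : Continuous (Fu g)) :
    ∫ u in Set.Iic L, Real.exp (a*u) * ‖Fu g u‖^2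
      ≤ Real.exp (a*L) * (2*π * ∫ η, ‖g η‖^2) := by
  -- integrability of exp (a*u) on Iic L
  have h1 : Integrable ((Set.Iic (a*L)).indicator Real.exp) :=
    (integrableOn_exp_Iic (a*L)).integrable_indicator measurableSet_Iic
  have h2 := (integrable_comp_mul_left_iff
    ((Set.Iic (a*L)).indicator Real.exp) ha.ne').2 h1
  have hexpint : IntegrableOn (fun u : ℝ => Real.exp (a*u)) (Set.Iic L) := by
    rw [← integrable_indicator_iff measurableSet_Iic]
    refine h2.congr (Filter.Eventually.of_forall fun u => ?_)
    simp only [Set.indicator_apply, Set.mem_Iic, mul_le_mul_iff_right₀ ha]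
  -- integrability of the main integrand on Iic L
  have hQint : IntegrableOn (fun u : ℝ => Real.exp (a*u) * ‖Fu g u‖^2) (Set.Iic L) := by
    refine Integrable.mono' ((hexpint.const_mul ((∫ η, ‖g η‖)^2)))
      ?_ (Filter.Eventually.of_forall fun u => ?_)
    · exact (((Real.continuous_exp.comp (by fun_prop)).mul
        ((hFc.norm.pow 2))).aestronglyMeasurable).restrict
    · rw [Real.norm_of_nonneg (by positivity)]
      calc Real.exp (a*u) * ‖Fu g u‖^2
          ≤ Real.exp (a*u) * (∫ η, ‖g η‖)^2 :=
            mul_le_mul_of_nonneg_left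
              (pow_le_pow_left₀ (norm_nonneg _) (Fu_bound' g u) 2) (Real.exp_nonneg _)
        _ = (∫ η, ‖g η‖)^2 * Real.exp (a*u) := by ring
  -- dominated convergence over εₙ = 1/(n+1)
  have hDCT : Filter.Tendsto
      (fun n : ℕ => ∫ u in Set.Iic L,
        Real.exp (a*u) * Real.exp (-(1/((n:ℝ)+1))*u^2) * ‖Fu g u‖^2)
      Filter.atTop (nhds (∫ u in Set.Iic L, Real.exp (a*u) * ‖Fu g u‖^2)) := by
    refine MeasureTheory.tendsto_integral_of_dominated_convergence
      (fun u => Real.exp (a*u) * ‖Fu g u‖^2) ?_ hQint ?_ ?_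
    · intro n
      exact ((((Real.continuous_exp.comp (by fun_prop)).mul
        (Real.continuous_exp.comp (by fun_prop))).mul
        ((hFc.norm.pow 2))).aestronglyMeasurable).restrict
    · intro n
      refine Filter.Eventually.of_forall fun u => ?_
      rw [Real.norm_of_nonneg (by positivity)]
      have h1 : Real.exp (-(1/((n:ℝ)+1))*u^2) ≤ 1 := by
        rw [Real.exp_le_one_iff]
        have : (0:ℝ) ≤ 1/((n:ℝ)+1) * u^2 := by positivity
        linarith
      nlinarith [Real.exp_nonneg (a*u), norm_nonneg (Fu g u),
        sq_nonneg ‖Fu g u‖, Real.exp_nonneg (-(1/((n:ℝ)+1))*u^2),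
        mul_nonneg (Real.exp_nonneg (a*u)) (sq_nonneg ‖Fu g u‖)]
    · refine Filter.Eventually.of_forall fun u => ?_
      have h0 : Filter.Tendsto (fun n : ℕ => -(1/((n:ℝ)+1))*u^2) Filter.atTop (nhds 0) := by
        have := tendsto_one_div_add_atTop_nhds_zero_nat (𝕜 := ℝ)
        have h := (this.neg.mul_const (u^2))
        simpa using h
      have h1 : Filter.Tendsto (fun n : ℕ => Real.exp (-(1/((n:ℝ)+1))*u^2))
          Filter.atTop (nhds 1) := by
        have := (Real.continuous_exp.tendsto 0).comp h0
        simpa [Function.comp_def] using this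
      have := (h1.const_mul (Real.exp (a*u))).mul_const (‖Fu g u‖^2)
      simpa [mul_assoc] using this
  -- each term is bounded
  have hstep : ∀ n : ℕ, ∫ u in Set.Iic L,
      Real.exp (a*u) * Real.exp (-(1/((n:ℝ)+1))*u^2) * ‖Fu g u‖^2
      ≤ Real.exp (a*L) * (2*π * ∫ η, ‖g η‖^2) := by
    intro n
    set ε : ℝ := 1/((n:ℝ)+1) with hεdef
    have hε : 0 < ε := by positivity
    have hGint := gaussF_int hε hg1 hFc
    have hstep1 : ∫ u in Set.Iic L, Real.exp (a*u) * Real.exp (-ε*u^2) * ‖Fu g u‖^2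
        ≤ ∫ u in Set.Iic L, Real.exp (a*L) * (Real.exp (-ε*u^2) * ‖Fu g u‖^2) := by
      refine setIntegral_mono_on ?_ ((hGint.const_mul _).integrableOn) measurableSet_Iic
        (fun u hu => ?_)
      · refine Integrable.mono' hQint
          ((((Real.continuous_exp.comp (by fun_prop)).mul
            (Real.continuous_exp.comp (by fun_prop))).mul
            ((hFc.norm.pow 2))).aestronglyMeasurable).restrict
          (Filter.Eventually.of_forall fun u => ?_)
        rw [Real.norm_of_nonneg (by positivity)]
        have h1 : Real.exp (-ε*u^2) ≤ 1 := by
          rw [Real.exp_le_one_iff]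
          have : (0:ℝ) ≤ ε * u^2 := by positivity
          linarith
        nlinarith [Real.exp_nonneg (a*u), sq_nonneg ‖Fu g u‖,
          mul_nonneg (Real.exp_nonneg (a*u)) (sq_nonneg ‖Fu g u‖)]
      · have h1 : Real.exp (a*u) ≤ Real.exp (a*L) :=
          Real.exp_le_exp.2 (mul_le_mul_of_nonneg_left hu ha.le)
        have h2 : (0:ℝ) ≤ Real.exp (-ε*u^2) * ‖Fu g u‖^2 := by positivity
        calc Real.exp (a*u) * Real.exp (-ε*u^2) * ‖Fu g u‖^2
            = Real.exp (a*u) * (Real.exp (-ε*u^2) * ‖Fu g u‖^2) := by ring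
          _ ≤ Real.exp (a*L) * (Real.exp (-ε*u^2) * ‖Fu g u‖^2) :=
              mul_le_mul_of_nonneg_right h1 h2
    refine hstep1.trans ?_
    rw [integral_const_mul]
    refine mul_le_mul_of_nonneg_left ?_ (Real.exp_nonneg _)
    refine le_trans (setIntegral_le_integral hGint
      (Filter.Eventually.of_forall fun u => by positivity)) ?_
    exact gauss_bound hε hg1 hg2 (gK_integrable' hε) (gK_integral hε) (gK_nonneg ε)
      (gauss_fourier hε) hFc
  exact le_of_tendsto hDCT (Filter.Eventually.of_forall hstep)

end Aux

/-- The Mellin-type transform `E_g(y) = (1/(2π)) ∫_ℝ g(η) y^{δ₀ + iη} dη` for `y > 0`,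
where `y^{δ₀+iη} := exp((δ₀ + iη) log y)`. -/
noncomputable def mellinE (δ₀ : ℝ) (g : ℝ → ℂ) (y : ℝ) : ℂ :=
  (1 / (2 * π)) * ∫ η : ℝ, g η * Complex.exp (((δ₀ : ℂ) + (η : ℂ) * Complex.I) * Real.log y)

/-- **Lemma 6.3, abstract form.**
For `δ₀ > 0` and `g ∈ L¹(ℝ) ∩ L²(ℝ)`, for every `x > 0`,
`∫_0^x |E_g(t)|² dt ≤ (1/(2π)) (∫_ℝ |g(η)|² dη) · x^{2δ₀+1}`. -/
theorem stmt_10 (δ₀ : ℝ) (hδ₀ : 0 < δ₀) (g : ℝ → ℂ)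
    (hg1 : Integrable g) (hg2 : MemLp g 2 (volume : Measure ℝ)) :
    ∀ x : ℝ, 0 < x →
      ∫ t in Set.Ioc (0 : ℝ) x, ‖mellinE δ₀ g t‖ ^ 2 ≤
        (1 / (2 * π)) * (∫ η : ℝ, ‖g η‖ ^ 2) * x ^ (2 * δ₀ + 1) := by
  intro x hx
  set L := Real.log x with hL
  have hFc : Continuous (Fu g) := Fu_cont hg1
  have hπ : (0:ℝ) < π := Real.pi_pos
  -- norm of mellinE at exp u
  have hE : ∀ u : ℝ, ‖mellinE δ₀ g (Real.exp u)‖^2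
      = (1/(2*π))^2 * (Real.exp ((2*δ₀)*u) * ‖Fu g u‖^2) := by
    intro u
    have h1 : mellinE δ₀ g (Real.exp u)
        = (1/(2*(π:ℂ))) * (Complex.exp ((δ₀:ℂ)*(u:ℂ)) * Fu g u) := by
      unfold mellinE
      rw [Real.log_exp, Fu]
      congr 1
      rw [← integral_const_mul]
      congr 1; funext η
      rw [show ((δ₀:ℂ) + (η:ℂ)*Complex.I) * (u:ℂ)
          = (δ₀:ℂ)*(u:ℂ) + (η:ℂ)*(u:ℂ)*Complex.I by ring,
        Complex.exp_add]
      ring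
    rw [h1, norm_mul, norm_mul]
    have hc : ‖(1/(2*(π:ℂ)))‖ = 1/(2*π) := by
      rw [show (1/(2*(π:ℂ))) = (((1/(2*π) : ℝ)):ℂ) by push_cast; ring, Complex.norm_real,
        Real.norm_of_nonneg (by positivity)]
    have he : ‖Complex.exp ((δ₀:ℂ)*(u:ℂ))‖ = Real.exp (δ₀*u) := by
      rw [show ((δ₀:ℂ)*(u:ℂ)) = ((δ₀*u : ℝ):ℂ) by push_cast; ring,
        Complex.norm_exp_ofReal]
    rw [hc, he, show (2*δ₀)*u = δ₀*u + δ₀*u by ring, Real.exp_add]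
    ring
  -- change of variables t = exp u
  have himg : Real.exp '' Set.Iic L = Set.Ioc (0:ℝ) x := by
    ext t; constructor
    · rintro ⟨u, hu, rfl⟩
      refine ⟨Real.exp_pos u, ?_⟩
      calc Real.exp u ≤ Real.exp L := Real.exp_le_exp.2 hu
        _ = x := by rw [hL, Real.exp_log hx]
    · rintro ⟨ht0, htx⟩
      refine ⟨Real.log t, ?_, Real.exp_log ht0⟩
      rw [Set.mem_Iic, hL]
      exact Real.log_le_log ht0 htx
  have hCoV : ∫ t in Set.Ioc (0:ℝ) x, ‖mellinE δ₀ g t‖^2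
      = ∫ u in Set.Iic L, |Real.exp u| • ‖mellinE δ₀ g (Real.exp u)‖^2 := by
    rw [← himg]
    exact integral_image_eq_integral_abs_deriv_smul measurableSet_Iic
      (fun u _ => (Real.hasDerivAt_exp u).hasDerivWithinAt)
      (Real.exp_injective.injOn) _
  have hptw : ∀ u : ℝ, |Real.exp u| • ‖mellinE δ₀ g (Real.exp u)‖^2
      = (1/(2*π))^2 * (Real.exp ((2*δ₀+1)*u) * ‖Fu g u‖^2) := by
    intro u
    rw [abs_of_pos (Real.exp_pos u), smul_eq_mul, hE u,
      show (2*δ₀+1)*u = (2*δ₀)*u + u by ring, Real.exp_add]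
    ring
  rw [hCoV]
  simp_rw [hptw]
  rw [integral_const_mul]
  have hQ := Q_bound (a := 2*δ₀+1) (L := L) (by linarith) hg1 hg2 hFc
  calc (1/(2*π))^2 * ∫ u in Set.Iic L, Real.exp ((2*δ₀+1)*u) * ‖Fu g u‖^2
      ≤ (1/(2*π))^2 * (Real.exp ((2*δ₀+1)*L) * (2*π * ∫ η, ‖g η‖^2)) :=
        mul_le_mul_of_nonneg_left hQ (by positivity)
    _ = (1/(2*π)) * (∫ η, ‖g η‖^2) * x ^ (2*δ₀+1) := by
        rw [Real.rpow_def_of_pos hx, hL, mul_comm (Real.log x) (2*δ₀+1)]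
        field_simp
end

section
/- (Theorem 6.2, abstract Tauberian form.) Let 0 < δ₀ < 1, let E : (0, ∞) → ℝ be measurable, and suppose: (i) there is C₁ > 0 such that ∫_0^x E(t)² dt ≤ C₁ · x^{2δ₀+1} for all x > 0; and (ii) there are A, B ∈ ℝ such that the function x ↦ E(x) + x·(A·log x + B) is nondecreasing on [3, ∞). Then there is a constant C > 0 such that |E(x)| ≤ C · x^{(2δ₀+1)/3} · log x for all x ≥ 3. -/
open MeasureTheory Real
open scoped ENNReal NNReal
open scoped ENNReal NNReal

lemma cs_bound (E : ℝ → ℝ) (hE : Measurable E) (a b M : ℝ) (hM : 0 ≤ M)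
    (hab : a ≤ b)
    (hL : ∫⁻ t in Set.Ioc a b, ENNReal.ofReal (E t ^ 2) ≤ ENNReal.ofReal M) :
    IntegrableOn E (Set.Ioc a b) ∧
      ∫ t in Set.Ioc a b, |E t| ≤ Real.sqrt (b - a) * Real.sqrt M := by
  set μ := volume.restrict (Set.Ioc a b) with hμ
  have h2 : Real.HolderConjugate 2 2 := Real.HolderConjugate.two_two
  have key : ∫⁻ t, ENNReal.ofReal |E t| ∂μ ≤
      ENNReal.ofReal (Real.sqrt M * Real.sqrt (b - a)) := by
    have H := ENNReal.lintegral_mul_le_Lp_mul_Lq μ h2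
      (f := fun t => ENNReal.ofReal |E t|) (g := fun _ => 1)
      (hE.abs.ennreal_ofReal.aemeasurable) aemeasurable_const
    simp only [Pi.mul_apply, mul_one, one_mul] at H
    refine H.trans ?_
    have hsq : ∀ t : ℝ, (ENNReal.ofReal |E t|) ^ (2:ℝ) = ENNReal.ofReal (E t ^ 2) := by
      intro t
      rw [ENNReal.ofReal_rpow_of_nonneg (abs_nonneg _) (by norm_num : (0:ℝ) ≤ 2),
        Real.rpow_two, sq_abs]
    have h1 : (∫⁻ t, (ENNReal.ofReal |E t|) ^ (2:ℝ) ∂μ) ^ (1/(2:ℝ)) ≤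
        ENNReal.ofReal (Real.sqrt M) := by
      simp_rw [hsq]
      refine (ENNReal.rpow_le_rpow hL (by norm_num)).trans (le_of_eq ?_)
      rw [ENNReal.ofReal_rpow_of_nonneg hM (by norm_num), ← Real.sqrt_eq_rpow]
    have h2' : (∫⁻ t, ((fun _ : ℝ => (1:ℝ≥0∞)) t) ^ (2:ℝ) ∂μ) ^ (1/(2:ℝ)) =
        ENNReal.ofReal (Real.sqrt (b - a)) := by
      simp only [ENNReal.one_rpow, lintegral_one, hμ, Measure.restrict_apply_univ,
        Real.volume_Ioc]
      rw [ENNReal.ofReal_rpow_of_nonneg (by linarith) (by norm_num), ← Real.sqrt_eq_rpow]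
    rw [ENNReal.ofReal_mul (Real.sqrt_nonneg _)]
    exact mul_le_mul' h1 h2'.le
  have hint : IntegrableOn E (Set.Ioc a b) := by
    refine ⟨hE.aestronglyMeasurable, ?_⟩
    rw [HasFiniteIntegral]
    have : ∀ t : ℝ, (‖E t‖ₑ : ℝ≥0∞) = ENNReal.ofReal |E t| := by
      intro t; rw [← ofReal_norm, Real.norm_eq_abs]
    simp_rw [this]
    exact key.trans_lt ENNReal.ofReal_lt_top
  refine ⟨hint, ?_⟩
  have habs : ∫ t, |E t| ∂μ = (∫⁻ t, ENNReal.ofReal |E t| ∂μ).toReal := by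
    rw [integral_eq_lintegral_of_nonneg_ae (Filter.Eventually.of_forall fun t => abs_nonneg _)
      hE.abs.aestronglyMeasurable]
  rw [habs, mul_comm]
  exact ENNReal.toReal_le_of_le_ofReal (by positivity) key


lemma f_diff (A B s u : ℝ) (hs : 1 ≤ s) (hsu : s ≤ u) :
    |u * (A * Real.log u + B) - s * (A * Real.log s + B)| ≤
      (u - s) * (|A| * Real.log u + |A| + |B|) := by
  have hs0 : 0 < s := by linarith
  have hu0 : 0 < u := by linarith
  have hlogu : 0 ≤ Real.log u := Real.log_nonneg (by linarith)
  have hid : u * (A * Real.log u + B) - s * (A * Real.log s + B)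
      = (u - s) * (A * Real.log u + B) + s * A * (Real.log u - Real.log s) := by ring
  have hlog : s * (Real.log u - Real.log s) ≤ u - s := by
    have h1 : Real.log u - Real.log s = Real.log (u / s) := (Real.log_div hu0.ne' hs0.ne').symm
    have h2 : Real.log (u / s) ≤ u / s - 1 := Real.log_le_sub_one_of_pos (by positivity)
    rw [h1]
    calc s * Real.log (u / s) ≤ s * (u / s - 1) := by nlinarith
      _ = u - s := by field_simp
  have hlognn : 0 ≤ Real.log u - Real.log s := by
    have := Real.log_le_log hs0 hsu
    linarith
  calc |u * (A * Real.log u + B) - s * (A * Real.log s + B)|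
      ≤ |(u - s) * (A * Real.log u + B)| + |s * A * (Real.log u - Real.log s)| := by
        rw [hid]; exact abs_add_le _ _
    _ ≤ (u - s) * (|A| * Real.log u + |B|) + |A| * (u - s) := by
        refine add_le_add ?_ ?_
        · rw [abs_mul, abs_of_nonneg (by linarith : (0:ℝ) ≤ u - s)]
          have : |A * Real.log u + B| ≤ |A| * Real.log u + |B| := by
            calc |A * Real.log u + B| ≤ |A * Real.log u| + |B| := abs_add_le _ _
              _ = |A| * Real.log u + |B| := by rw [abs_mul, abs_of_nonneg hlogu]
          nlinarith [abs_nonneg (A * Real.log u + B)]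
        · rw [abs_mul, abs_mul, abs_of_nonneg hs0.le, abs_of_nonneg hlognn]
          calc s * |A| * (Real.log u - Real.log s) = |A| * (s * (Real.log u - Real.log s)) := by
                ring
            _ ≤ |A| * (u - s) := by
                exact mul_le_mul_of_nonneg_left hlog (abs_nonneg _)
    _ = (u - s) * (|A| * Real.log u + |A| + |B|) := by ring

lemma log3_ge_one : (1:ℝ) ≤ Real.log 3 := by
  have h1 : Real.exp 1 ≤ 3 := by
    have := Real.exp_one_lt_d9; linarith
  calc (1:ℝ) = Real.log (Real.exp 1) := (Real.log_exp 1).symm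
    _ ≤ Real.log 3 := Real.log_le_log (Real.exp_pos 1) h1

set_option maxHeartbeats 2000000 in
lemma pointwise_bound (δ₀ : ℝ) (hδ₀ : 0 < δ₀) (hδ₀' : δ₀ < 1)
    (E : ℝ → ℝ) (hE : Measurable E)
    (C₁ : ℝ) (hC₁ : 0 < C₁)
    (hL2 : ∀ x : ℝ, 0 < x →
      ∫⁻ t in Set.Ioc (0 : ℝ) x, ENNReal.ofReal (E t ^ 2) ≤
        ENNReal.ofReal (C₁ * x ^ (2 * δ₀ + 1)))
    (A B : ℝ)
    (hmono : MonotoneOn (fun x => E x + x * (A * Real.log x + B)) (Set.Ici (3 : ℝ)))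
    (x : ℝ) (hx6 : 6 ≤ x) (hhalf : x ^ ((2 * δ₀ + 1) / 3) ≤ x / 2) :
    |E x| ≤ (3 * Real.sqrt C₁ + (3 * |A| + |B| + 1)) * x ^ ((2 * δ₀ + 1) / 3) *
      Real.log x := by
  have hx0 : (0:ℝ) < x := by linarith
  set P : ℝ := 2 * δ₀ + 1 with hPdef
  set β : ℝ := P / 3 with hβdef
  set K : ℝ := 3 * |A| + |B| + 1 with hKdef
  set h : ℝ := x ^ β with hhdef
  have hP0 : 0 < P := by rw [hPdef]; linarith
  have hP3 : P < 3 := by rw [hPdef]; linarith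
  have hβ0 : 0 < β := by rw [hβdef]; linarith
  have hh0 : 0 < h := Real.rpow_pos_of_pos hx0 β
  have hhx : h ≤ x / 2 := hhalf
  have hx32 : (3:ℝ) ≤ x / 2 := by linarith
  have hlogx : 1 ≤ Real.log x :=
    log3_ge_one.trans (Real.log_le_log (by norm_num) (by linarith))
  have hKnn : 1 ≤ K := by
    have := abs_nonneg A; have := abs_nonneg B; rw [hKdef]; linarith
  have hsqrth : Real.sqrt h = x ^ (β / 2) := by
    rw [hhdef, Real.sqrt_eq_rpow, ← Real.rpow_mul hx0.le]
    ring_nf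
  have hkey : Real.sqrt h * x ^ (P / 2) = h * h := by
    rw [hsqrth, hhdef, ← Real.rpow_add hx0, ← Real.rpow_add hx0]
    congr 1
    rw [hβdef]; ring
  have hsqM : ∀ b : ℝ, 0 ≤ b → Real.sqrt (C₁ * b ^ P) = Real.sqrt C₁ * b ^ (P / 2) := by
    intro b hb
    rw [Real.sqrt_mul hC₁.le, Real.sqrt_eq_rpow (b ^ P), ← Real.rpow_mul hb]
    congr 2
    ring
  have h23 : (2:ℝ) ^ (P / 2) ≤ 3 := by
    have h1 : (2:ℝ) ^ (P / 2) ≤ 2 ^ ((3:ℝ) / 2) :=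
      Real.rpow_le_rpow_of_exponent_le one_le_two (by linarith)
    have h2 : (2:ℝ) ^ ((3:ℝ) / 2) ≤ 3 := by
      rw [show (3:ℝ)/2 = 3 * (1/2) by ring, Real.rpow_mul (by norm_num),
        show ((3:ℝ) : ℝ) = ((3:ℕ) : ℝ) by norm_num, Real.rpow_natCast,
        ← Real.sqrt_eq_rpow]
      have : Real.sqrt ((2:ℝ)^(3:ℕ)) ≤ Real.sqrt 9 := Real.sqrt_le_sqrt (by norm_num)
      rwa [show (9:ℝ) = 3^2 by norm_num, Real.sqrt_sq (by norm_num : (0:ℝ) ≤ 3)] at this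
    linarith
  have hLsub : ∀ a b : ℝ, 0 < a → a ≤ b →
      ∫⁻ t in Set.Ioc a b, ENNReal.ofReal (E t ^ 2) ≤ ENNReal.ofReal (C₁ * b ^ P) := by
    intro a b ha hab
    exact (lintegral_mono_set (Set.Ioc_subset_Ioc_left ha.le)).trans (hL2 b (ha.trans_le hab))
  have hKbound : ∀ L : ℝ, 0 ≤ L → L ≤ 2 * Real.log x →
      |A| * L + |A| + |B| ≤ K * Real.log x := by
    intro L hL0 hL2'
    have hA := abs_nonneg A; have hB := abs_nonneg B
    have e1 : |A| * L ≤ |A| * (2 * Real.log x) := mul_le_mul_of_nonneg_left hL2' hA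
    have e2 : 0 ≤ |A| * (Real.log x - 1) := mul_nonneg hA (by linarith)
    have e3 : 0 ≤ |B| * (Real.log x - 1) := mul_nonneg hB (by linarith)
    rw [hKdef]; nlinarith
  clear_value h K β P
  -- upper bound
  have hupper : E x ≤ (3 * Real.sqrt C₁ + K) * h * Real.log x := by
    obtain ⟨hint, habs⟩ := cs_bound E hE x (x + h) (C₁ * (x + h) ^ P) (by positivity)
      (by linarith) (hLsub x (x + h) hx0 (by linarith))
    have habs' : ∫ t in Set.Ioc x (x + h), |E t| ≤ 3 * Real.sqrt C₁ * (h * h) := by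
      refine habs.trans ?_
      rw [hsqM (x + h) (by linarith), show x + h - x = h by ring]
      have hrp : (x + h) ^ (P/2) ≤ 2 ^ (P/2) * x ^ (P/2) := by
        rw [← Real.mul_rpow (by norm_num) hx0.le]
        exact Real.rpow_le_rpow (by linarith) (by linarith) (by linarith)
      have hrp2 : (x + h) ^ (P/2) ≤ 3 * x ^ (P/2) := by
        refine hrp.trans ?_
        have hxp : (0:ℝ) ≤ x ^ (P/2) := le_of_lt (Real.rpow_pos_of_pos hx0 _)
        nlinarith
      calc Real.sqrt h * (Real.sqrt C₁ * (x + h) ^ (P/2))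
          ≤ Real.sqrt h * (Real.sqrt C₁ * (3 * x ^ (P/2))) :=
            mul_le_mul_of_nonneg_left
              (mul_le_mul_of_nonneg_left hrp2 (Real.sqrt_nonneg C₁)) (Real.sqrt_nonneg h)
        _ = 3 * Real.sqrt C₁ * (Real.sqrt h * x ^ (P/2)) := by ring
        _ = 3 * Real.sqrt C₁ * (h * h) := by rw [hkey]
    have hpt : ∀ t ∈ Set.Ioc x (x + h), E x ≤ E t + K * h * Real.log x := by
      intro t ht
      obtain ⟨ht1, ht2⟩ := ht
      have hmx := hmono (Set.mem_Ici.mpr (by linarith)) (Set.mem_Ici.mpr (by linarith)) ht1.le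
      simp only at hmx
      have fd := f_diff A B x t (by linarith) ht1.le
      have hlt : Real.log t ≤ 2 * Real.log x := by
        have h1 : Real.log t ≤ Real.log (2 * x) := Real.log_le_log (by linarith) (by linarith)
        rw [Real.log_mul (by norm_num) (by linarith)] at h1
        have := Real.log_two_lt_d9; linarith
      have hfd2 : |t * (A * Real.log t + B) - x * (A * Real.log x + B)| ≤ K * h * Real.log x := by
        refine fd.trans ?_
        have hA := abs_nonneg A; have hB := abs_nonneg B
        have hlogt : 0 ≤ Real.log t := Real.log_nonneg (by linarith)
        have h1 : |A| * Real.log t + |A| + |B| ≤ K * Real.log x :=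
          hKbound _ hlogt hlt
        have hstuff : 0 ≤ |A| * Real.log t + |A| + |B| := by positivity
        calc (t - x) * (|A| * Real.log t + |A| + |B|) ≤ h * (K * Real.log x) :=
              mul_le_mul (by linarith) h1 hstuff hh0.le
          _ = K * h * Real.log x := by ring
      have := le_abs_self (t * (A * Real.log t + B) - x * (A * Real.log x + B))
      linarith
    have hmeas : MeasurableSet (Set.Ioc x (x + h)) := measurableSet_Ioc
    have hvolfin : volume (Set.Ioc x (x + h)) < ⊤ := by
      rw [Real.volume_Ioc]; exact ENNReal.ofReal_lt_top
    have hvol : (volume (Set.Ioc x (x + h))).toReal = h := by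
      rw [Real.volume_Ioc, ENNReal.toReal_ofReal (by linarith)]; ring
    have hconst : IntegrableOn (fun _ : ℝ => E x) (Set.Ioc x (x + h)) volume :=
      integrableOn_const hvolfin.ne
    have hconst2 : IntegrableOn (fun _ : ℝ => K * h * Real.log x) (Set.Ioc x (x + h)) volume :=
      integrableOn_const hvolfin.ne
    have hint2 : IntegrableOn (fun t => E t + K * h * Real.log x) (Set.Ioc x (x + h)) volume :=
      hint.add hconst2
    have hIneq := setIntegral_mono_on hconst hint2 hmeas hpt
    rw [setIntegral_const, measureReal_def, hvol, smul_eq_mul] at hIneq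
    rw [integral_add hint hconst2, setIntegral_const, measureReal_def, hvol, smul_eq_mul] at hIneq
    have hEle : ∫ t in Set.Ioc x (x + h), E t ≤ ∫ t in Set.Ioc x (x + h), |E t| :=
      setIntegral_mono_on hint hint.abs hmeas (fun t _ => le_abs_self _)
    have hstep : h * E x ≤ 3 * Real.sqrt C₁ * (h * h) + h * (K * h * Real.log x) := by
      linarith
    have hdiv : E x ≤ 3 * Real.sqrt C₁ * h + K * h * Real.log x := by
      have h2 : h * E x ≤ h * (3 * Real.sqrt C₁ * h + K * h * Real.log x) := by
        calc h * E x ≤ 3 * Real.sqrt C₁ * (h * h) + h * (K * h * Real.log x) := hstep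
          _ = h * (3 * Real.sqrt C₁ * h + K * h * Real.log x) := by ring
      exact le_of_mul_le_mul_left h2 hh0
    have e4 : 0 ≤ 3 * Real.sqrt C₁ * h * (Real.log x - 1) :=
      mul_nonneg (by positivity) (by linarith)
    nlinarith [Real.sqrt_nonneg C₁]
  -- lower bound
  have hlower : -((3 * Real.sqrt C₁ + K) * h * Real.log x) ≤ E x := by
    obtain ⟨hint, habs⟩ := cs_bound E hE (x - h) x (C₁ * x ^ P) (by positivity)
      (by linarith) (hLsub (x - h) x (by linarith) (by linarith))
    have habs' : ∫ t in Set.Ioc (x - h) x, |E t| ≤ Real.sqrt C₁ * (h * h) := by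
      refine habs.trans (le_of_eq ?_)
      rw [hsqM x hx0.le, show x - (x - h) = h by ring, ← hkey]
      ring
    have hpt : ∀ t ∈ Set.Ioc (x - h) x, E t - K * h * Real.log x ≤ E x := by
      intro t ht
      obtain ⟨ht1, ht2⟩ := ht
      have hmx := hmono (Set.mem_Ici.mpr (by linarith)) (Set.mem_Ici.mpr (by linarith)) ht2
      simp only at hmx
      have fd := f_diff A B t x (by linarith) ht2
      have hfd2 : |x * (A * Real.log x + B) - t * (A * Real.log t + B)| ≤ K * h * Real.log x := by
        refine fd.trans ?_
        have hA := abs_nonneg A; have hB := abs_nonneg B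
        have h1 : |A| * Real.log x + |A| + |B| ≤ K * Real.log x :=
          hKbound _ (by linarith) (by linarith)
        have hstuff : 0 ≤ |A| * Real.log x + |A| + |B| := by positivity
        calc (x - t) * (|A| * Real.log x + |A| + |B|) ≤ h * (K * Real.log x) :=
              mul_le_mul (by linarith) h1 hstuff hh0.le
          _ = K * h * Real.log x := by ring
      have := le_abs_self (x * (A * Real.log x + B) - t * (A * Real.log t + B))
      linarith
    have hmeas : MeasurableSet (Set.Ioc (x - h) x) := measurableSet_Ioc
    have hvolfin : volume (Set.Ioc (x - h) x) < ⊤ := by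
      rw [Real.volume_Ioc]; exact ENNReal.ofReal_lt_top
    have hvol : (volume (Set.Ioc (x - h) x)).toReal = h := by
      rw [Real.volume_Ioc, ENNReal.toReal_ofReal (by linarith)]; ring
    have hconst : IntegrableOn (fun _ : ℝ => E x) (Set.Ioc (x - h) x) volume :=
      integrableOn_const hvolfin.ne
    have hconst2 : IntegrableOn (fun _ : ℝ => K * h * Real.log x) (Set.Ioc (x - h) x) volume :=
      integrableOn_const hvolfin.ne
    have hint2 : IntegrableOn (fun t => E t - K * h * Real.log x) (Set.Ioc (x - h) x) volume :=
      hint.sub hconst2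
    have hIneq := setIntegral_mono_on hint2 hconst hmeas hpt
    rw [setIntegral_const, measureReal_def, hvol, smul_eq_mul] at hIneq
    rw [integral_sub hint hconst2, setIntegral_const, measureReal_def, hvol, smul_eq_mul] at hIneq
    have hEge : -∫ t in Set.Ioc (x - h) x, |E t| ≤ ∫ t in Set.Ioc (x - h) x, E t := by
      have hintabs : IntegrableOn (fun t => -|E t|) (Set.Ioc (x - h) x) volume := hint.abs.neg
      have h5 := setIntegral_mono_on hintabs hint hmeas (fun t _ => neg_abs_le _)
      rwa [integral_neg] at h5
    have hstep : h * E x ≥ -(Real.sqrt C₁ * (h * h)) - h * (K * h * Real.log x) := by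
      linarith
    have hdiv : -(Real.sqrt C₁ * h + K * h * Real.log x) ≤ E x := by
      have h2 : h * (-(Real.sqrt C₁ * h + K * h * Real.log x)) ≤ h * E x := by
        calc h * (-(Real.sqrt C₁ * h + K * h * Real.log x))
            = -(Real.sqrt C₁ * (h * h)) - h * (K * h * Real.log x) := by ring
          _ ≤ h * E x := hstep
      exact le_of_mul_le_mul_left h2 hh0
    have e4 : 0 ≤ 3 * Real.sqrt C₁ * h * (Real.log x - 1) :=
      mul_nonneg (by positivity) (by linarith)
    nlinarith [Real.sqrt_nonneg C₁]
  exact abs_le.mpr ⟨hlower, hupper⟩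

set_option maxHeartbeats 1000000 in
/-- **Theorem 6.2, abstract Tauberian form.**
Let `0 < δ₀ < 1` and let `E : (0,∞) → ℝ` be measurable with
(i) `∫_0^x E(t)² dt ≤ C₁ x^{2δ₀+1}` for all `x > 0` (some `C₁ > 0`), and
(ii) `x ↦ E(x) + x(A log x + B)` nondecreasing on `[3, ∞)` for some `A, B ∈ ℝ`.
Then there is `C > 0` with `|E(x)| ≤ C x^{(2δ₀+1)/3} log x` for all `x ≥ 3`. -/
theorem stmt_11 (δ₀ : ℝ) (hδ₀ : 0 < δ₀) (hδ₀' : δ₀ < 1)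
    (E : ℝ → ℝ) (hE : Measurable E)
    (C₁ : ℝ) (hC₁ : 0 < C₁)
    (hL2 : ∀ x : ℝ, 0 < x →
      ∫⁻ t in Set.Ioc (0 : ℝ) x, ENNReal.ofReal (E t ^ 2) ≤
        ENNReal.ofReal (C₁ * x ^ (2 * δ₀ + 1)))
    (A B : ℝ)
    (hmono : MonotoneOn (fun x => E x + x * (A * Real.log x + B)) (Set.Ici (3 : ℝ))) :
    ∃ C : ℝ, 0 < C ∧ ∀ x : ℝ, 3 ≤ x →
      |E x| ≤ C * x ^ ((2 * δ₀ + 1) / 3) * Real.log x := by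
  set b : ℝ := (2 * δ₀ + 1) / 3 with hbdef
  have hb0 : 0 < b := by rw [hbdef]; linarith
  have hb1 : b < 1 := by rw [hbdef]; linarith
  have h1b : 0 < 1 - b := by linarith
  set X₀ : ℝ := max 6 ((2:ℝ) ^ (1 / (1 - b))) with hX₀def
  have hX₀6 : (6:ℝ) ≤ X₀ := le_max_left _ _
  have hX₀pos : (0:ℝ) < X₀ := by linarith
  have hhalfX : ∀ x : ℝ, X₀ ≤ x → x ^ b ≤ x / 2 := by
    intro x hx
    have hx0 : (0:ℝ) < x := by linarith
    have hx2 : (2:ℝ) ^ (1 / (1 - b)) ≤ x := le_trans (le_max_right _ _) hx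
    have hpow : (2:ℝ) ≤ x ^ (1 - b) := by
      have h1 : ((2:ℝ) ^ (1 / (1 - b))) ^ (1 - b) ≤ x ^ (1 - b) :=
        Real.rpow_le_rpow (Real.rpow_nonneg (by norm_num) _) hx2 h1b.le
      have h2 : ((2:ℝ) ^ (1 / (1 - b))) ^ (1 - b) = 2 := by
        rw [← Real.rpow_mul (by norm_num : (0:ℝ) ≤ 2)]
        rw [show (1 / (1 - b)) * (1 - b) = 1 by field_simp]
        exact Real.rpow_one 2
      linarith
    have hmul : x ^ b * 2 ≤ x ^ b * x ^ (1 - b) :=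
      mul_le_mul_of_nonneg_left hpow (Real.rpow_nonneg hx0.le _)
    rw [← Real.rpow_add hx0, show b + (1 - b) = 1 by ring, Real.rpow_one] at hmul
    linarith
  -- compact part
  set C₀ : ℝ := |E 3 + 3 * (A * Real.log 3 + B)| + |E X₀ + X₀ * (A * Real.log X₀ + B)|
    + X₀ * (|A| * Real.log X₀ + |B|) with hC₀def
  have hlogX₀ : 0 ≤ Real.log X₀ := Real.log_nonneg (by linarith)
  have hC₀nn : 0 ≤ C₀ := by
    have h1 := abs_nonneg (E 3 + 3 * (A * Real.log 3 + B))
    have h2 := abs_nonneg (E X₀ + X₀ * (A * Real.log X₀ + B))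
    have h3 : 0 ≤ X₀ * (|A| * Real.log X₀ + |B|) :=
      mul_nonneg hX₀pos.le (by positivity)
    rw [hC₀def]; linarith
  have hcompact : ∀ x : ℝ, 3 ≤ x → x ≤ X₀ → |E x| ≤ C₀ := by
    intro x hx3 hxX
    have hx0 : (0:ℝ) < x := by linarith
    have m1 := hmono (Set.mem_Ici.mpr le_rfl) (Set.mem_Ici.mpr hx3) hx3
    have m2 := hmono (Set.mem_Ici.mpr hx3) (Set.mem_Ici.mpr (by linarith)) hxX
    simp only at m1 m2
    have hMabs : |E x + x * (A * Real.log x + B)| ≤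
        |E 3 + 3 * (A * Real.log 3 + B)| + |E X₀ + X₀ * (A * Real.log X₀ + B)| := by
      have h1 := neg_abs_le (E 3 + 3 * (A * Real.log 3 + B))
      have h2 := le_abs_self (E X₀ + X₀ * (A * Real.log X₀ + B))
      have h3 := abs_nonneg (E 3 + 3 * (A * Real.log 3 + B))
      have h4 := abs_nonneg (E X₀ + X₀ * (A * Real.log X₀ + B))
      rw [abs_le]; constructor <;> linarith
    have hfabs : |x * (A * Real.log x + B)| ≤ X₀ * (|A| * Real.log X₀ + |B|) := by
      rw [abs_mul, abs_of_pos hx0]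
      refine mul_le_mul hxX ?_ (abs_nonneg _) hX₀pos.le
      have hlx : 0 ≤ Real.log x := Real.log_nonneg (by linarith)
      have hlxX : Real.log x ≤ Real.log X₀ := Real.log_le_log hx0 hxX
      calc |A * Real.log x + B| ≤ |A * Real.log x| + |B| := abs_add_le _ _
        _ = |A| * Real.log x + |B| := by rw [abs_mul, abs_of_nonneg hlx]
        _ ≤ |A| * Real.log X₀ + |B| := by
            have := mul_le_mul_of_nonneg_left hlxX (abs_nonneg A); linarith
    calc |E x| = |(E x + x * (A * Real.log x + B)) - x * (A * Real.log x + B)| := by ring_nf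
      _ ≤ |E x + x * (A * Real.log x + B)| + |x * (A * Real.log x + B)| := abs_sub _ _
      _ ≤ C₀ := by rw [hC₀def]; linarith
  refine ⟨C₀ + 3 * Real.sqrt C₁ + (3 * |A| + |B| + 1), ?_, ?_⟩
  · have h1 := Real.sqrt_pos.mpr hC₁
    have := abs_nonneg A; have := abs_nonneg B
    linarith
  intro x hx3
  have hx0 : (0:ℝ) < x := by linarith
  have hlogx : 1 ≤ Real.log x :=
    log3_ge_one.trans (Real.log_le_log (by norm_num) hx3)
  have hxb1 : 1 ≤ x ^ b := by
    have := Real.rpow_le_rpow_of_exponent_le (by linarith : (1:ℝ) ≤ x) hb0.le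
    rwa [Real.rpow_zero] at this
  have hprod1 : 1 ≤ x ^ b * Real.log x := by nlinarith
  have hsC : 0 ≤ Real.sqrt C₁ := Real.sqrt_nonneg _
  have hA := abs_nonneg A; have hB := abs_nonneg B
  rcases le_total x X₀ with hle | hge
  · have h1 := hcompact x hx3 hle
    have h2 : C₀ ≤ C₀ * (x ^ b * Real.log x) := le_mul_of_one_le_right hC₀nn hprod1
    nlinarith
  · have h1 := pointwise_bound δ₀ hδ₀ hδ₀' E hE C₁ hC₁ hL2 A B hmono x
      (by linarith) (hhalfX x hge)
    have h2 : 0 ≤ x ^ b * Real.log x := by linarith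
    nlinarith
end

section
/- (Smoothing step in the proof of Theorem 6.2.) Let A, B ∈ ℝ and let E : (0, ∞) → ℝ be locally integrable and such that the function x ↦ E(x) + x·(A·log x + B) is nondecreasing on [3, ∞). Then there is a constant C > 0, depending only on A and B, such that for all x ≥ 3 and all H with 0 < H ≤ x: E(x) ≤ (1/H) ∫_x^{x+H} E(t) dt + C·H·log x, and, if moreover x − H ≥ 3, E(x) ≥ (1/H) ∫_{x−H}^{x} E(t) dt − C·H·log x. -/
open MeasureTheory Real

lemma g_diff_bound (A B : ℝ) (s u : ℝ) (hs : 3 ≤ s) (hsu : s ≤ u) :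
    |u * (A * Real.log u + B) - s * (A * Real.log s + B)|
      ≤ (u - s) * (|A| * (Real.log u + 1) + |B|) := by
  have hs0 : (0:ℝ) < s := by linarith
  have hu0 : (0:ℝ) < u := by linarith
  have hls : (0:ℝ) ≤ Real.log s := Real.log_nonneg (by linarith)
  have hlog : Real.log s ≤ Real.log u := Real.log_le_log hs0 hsu
  have hlu : (0:ℝ) ≤ Real.log u := le_trans hls hlog
  have hd : s * (Real.log u - Real.log s) ≤ u - s := by
    have h := Real.log_le_sub_one_of_pos (show 0 < u/s from div_pos hu0 hs0)
    rw [Real.log_div (ne_of_gt hu0) (ne_of_gt hs0)] at h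
    have : Real.log u - Real.log s ≤ (u - s)/s := by
      have : u/s - 1 = (u - s)/s := by field_simp
      linarith
    calc s * (Real.log u - Real.log s) ≤ s * ((u-s)/s) :=
          mul_le_mul_of_nonneg_left this hs0.le
      _ = u - s := by field_simp
  have h1 : 0 ≤ u * Real.log u - s * Real.log s := by nlinarith
  have h2 : u * Real.log u - s * Real.log s ≤ (u - s) * (Real.log u + 1) := by nlinarith
  have hA1 : A ≤ |A| := le_abs_self A
  have hA2 : -A ≤ |A| := neg_le_abs A
  have hB1 : B ≤ |B| := le_abs_self B
  have hB2 : -B ≤ |B| := neg_le_abs B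
  rw [abs_le]
  constructor <;> nlinarith [sub_nonneg.mpr hsu]

/-- **Smoothing step in the proof of Theorem 6.2.**
For `A, B ∈ ℝ` there is `C > 0` (depending only on `A` and `B`) such that for every locally
integrable `E : (0,∞) → ℝ` for which `x ↦ E(x) + x(A log x + B)` is nondecreasing on `[3,∞)`,
for all `x ≥ 3` and `0 < H ≤ x`:
`E(x) ≤ (1/H) ∫_x^{x+H} E(t) dt + C H log x`, and if moreover `x − H ≥ 3`,
`E(x) ≥ (1/H) ∫_{x−H}^x E(t) dt − C H log x`. -/
theorem stmt_12 (A B : ℝ) :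
    ∃ C : ℝ, 0 < C ∧ ∀ E : ℝ → ℝ,
      LocallyIntegrableOn E (Set.Ioi (0 : ℝ)) volume →
      MonotoneOn (fun x => E x + x * (A * Real.log x + B)) (Set.Ici (3 : ℝ)) →
      ∀ x : ℝ, 3 ≤ x → ∀ H : ℝ, 0 < H → H ≤ x →
        (E x ≤ (1 / H) * (∫ t in Set.Ioc x (x + H), E t) + C * H * Real.log x) ∧
        (3 ≤ x - H →
          (1 / H) * (∫ t in Set.Ioc (x - H) x, E t) - C * H * Real.log x ≤ E x) := by
  refine ⟨3 * |A| + |B| + 1, by positivity, ?_⟩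
  intro E hE hmono x hx H hH hHx
  set C := 3 * |A| + |B| + 1 with hC
  have hlogx : (1:ℝ) ≤ Real.log x := by
    calc (1:ℝ) ≤ Real.log 3 := by
          rw [show (1:ℝ) = Real.log (Real.exp 1) by simp]
          exact Real.log_le_log (Real.exp_pos 1) (by
            have := Real.exp_one_lt_d9; linarith)
      _ ≤ Real.log x := Real.log_le_log (by norm_num) hx
  have hlog2 : Real.log 2 ≤ 1 := by
    have := Real.log_le_sub_one_of_pos (show (0:ℝ) < 2 by norm_num); linarith
  constructor
  · -- upper bound
    have hsub : Set.Icc x (x+H) ⊆ Set.Ioi (0:ℝ) := fun t ht => by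
      simp only [Set.mem_Ioi]; have := ht.1; linarith
    have hint : IntegrableOn E (Set.Ioc x (x+H)) volume :=
      (hE.integrableOn_compact_subset hsub isCompact_Icc).mono_set Set.Ioc_subset_Icc_self
    have hpt : ∀ t ∈ Set.Ioc x (x+H), E x - C * H * Real.log x ≤ E t := by
      intro t ht
      have htx : x ≤ t := ht.1.le
      have hmle := hmono (Set.mem_Ici.mpr hx) (Set.mem_Ici.mpr (le_trans hx htx)) htx
      simp only at hmle
      have hgb := g_diff_bound A B x t hx htx
      have hlt : Real.log t ≤ 2 * Real.log x := by
        have h1 : Real.log t ≤ Real.log (2*x) :=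
          Real.log_le_log (by linarith) (by linarith [ht.2])
        rw [Real.log_mul (by norm_num) (by linarith)] at h1
        linarith
      have hbnd : (t - x) * (|A| * (Real.log t + 1) + |B|) ≤ C * H * Real.log x := by
        have h1 : |A| * (Real.log t + 1) + |B| ≤ C * Real.log x := by
          have hA : (0:ℝ) ≤ |A| := abs_nonneg A
          have hB : (0:ℝ) ≤ |B| := abs_nonneg B
          nlinarith
        have h2 : t - x ≤ H := by linarith [ht.2]
        have h3 : 0 ≤ t - x := by linarith
        have hlt0 : (0:ℝ) ≤ Real.log t := Real.log_nonneg (by linarith)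
        calc (t - x) * (|A| * (Real.log t + 1) + |B|) ≤ H * (C * Real.log x) := by
              apply mul_le_mul h2 h1 (by nlinarith [abs_nonneg A, abs_nonneg B]) hH.le
          _ = C * H * Real.log x := by ring
      have habs := (abs_le.mp hgb).2
      linarith
    have hS : MeasurableSet (Set.Ioc x (x+H)) := measurableSet_Ioc
    have hci : IntegrableOn (fun _ => E x - C * H * Real.log x) (Set.Ioc x (x+H)) volume :=
      (integrableOn_const_iff).mpr (Or.inr (by rw [Real.volume_Ioc]; exact ENNReal.ofReal_lt_top))
    have hmint := setIntegral_mono_on hci hint hS hpt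
    rw [setIntegral_const, Measure.real_def, Real.volume_Ioc, ENNReal.toReal_ofReal (by linarith : (0:ℝ) ≤ x + H - x)] at hmint
    have hHx' : x + H - x = H := by ring
    rw [hHx'] at hmint
    have := mul_le_mul_of_nonneg_left hmint (le_of_lt (one_div_pos.mpr hH))
    rw [smul_eq_mul] at this
    have heq : (1/H) * (H * (E x - C * H * Real.log x)) = E x - C * H * Real.log x := by
      field_simp
    rw [heq] at this
    linarith
  · -- lower bound
    intro hxH
    have hsub : Set.Icc (x-H) x ⊆ Set.Ioi (0:ℝ) := fun t ht => by
      simp only [Set.mem_Ioi]; have := ht.1; linarith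
    have hint : IntegrableOn E (Set.Ioc (x-H) x) volume :=
      (hE.integrableOn_compact_subset hsub isCompact_Icc).mono_set Set.Ioc_subset_Icc_self
    have hpt : ∀ t ∈ Set.Ioc (x-H) x, E t ≤ E x + C * H * Real.log x := by
      intro t ht
      have htx : t ≤ x := ht.2
      have ht3 : 3 ≤ t := by linarith [ht.1]
      have hmle := hmono (Set.mem_Ici.mpr ht3) (Set.mem_Ici.mpr hx) htx
      simp only at hmle
      have hgb := g_diff_bound A B t x ht3 htx
      have hbnd : (x - t) * (|A| * (Real.log x + 1) + |B|) ≤ C * H * Real.log x := by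
        have h1 : |A| * (Real.log x + 1) + |B| ≤ C * Real.log x := by
          have hA : (0:ℝ) ≤ |A| := abs_nonneg A
          have hB : (0:ℝ) ≤ |B| := abs_nonneg B
          nlinarith
        have h2 : x - t ≤ H := by linarith [ht.1]
        have h3 : 0 ≤ x - t := by linarith
        calc (x - t) * (|A| * (Real.log x + 1) + |B|) ≤ H * (C * Real.log x) := by
              apply mul_le_mul h2 h1 (by nlinarith [abs_nonneg A, abs_nonneg B]) hH.le
          _ = C * H * Real.log x := by ring
      have habs := (abs_le.mp hgb).2
      linarith
    have hS : MeasurableSet (Set.Ioc (x-H) x) := measurableSet_Ioc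
    have hci : IntegrableOn (fun _ => E x + C * H * Real.log x) (Set.Ioc (x-H) x) volume :=
      (integrableOn_const_iff).mpr (Or.inr (by rw [Real.volume_Ioc]; exact ENNReal.ofReal_lt_top))
    have hmint := setIntegral_mono_on hint hci hS hpt
    rw [setIntegral_const, Measure.real_def, Real.volume_Ioc, ENNReal.toReal_ofReal (by linarith : (0:ℝ) ≤ x - (x - H))] at hmint
    have hHx' : x - (x - H) = H := by ring
    rw [hHx'] at hmint
    have := mul_le_mul_of_nonneg_left hmint (le_of_lt (one_div_pos.mpr hH))
    rw [smul_eq_mul] at this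
    have heq : (1/H) * (H * (E x + C * H * Real.log x)) = E x + C * H * Real.log x := by
      field_simp
    rw [heq] at this
    linarith
end

section
/- For every w ∈ ℂ with Re(w) > 1, the function x ↦ (1 + x²)^{−w/2} is integrable on ℝ and ∫_ℝ (1 + x²)^{−w/2} dx = √π · Γ((w−1)/2) / Γ(w/2). (This evaluates ∫_{N_v} φ_v at a real archimedean place.) -/
open MeasureTheory Real Set

lemma aux_re_div_two (z : ℂ) : (z / 2).re = z.re / 2 := by
  rw [show (2 : ℂ) = ((2 : ℝ) : ℂ) by norm_num, Complex.div_ofReal_re]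

/-- **The archimedean integral `∫_{N_v} φ_v` at a real place.**
For `Re(w) > 1`, the function `x ↦ (1 + x²)^{−w/2}` is integrable on `ℝ` and
`∫_ℝ (1 + x²)^{−w/2} dx = √π · Γ((w−1)/2)/Γ(w/2)`. -/
theorem stmt_13 (w : ℂ) (hw : 1 < w.re) :
    Integrable (fun x : ℝ => ((1 + x ^ 2 : ℝ) : ℂ) ^ (-w / 2)) (volume : Measure ℝ) ∧
    ∫ x : ℝ, ((1 + x ^ 2 : ℝ) : ℂ) ^ (-w / 2) =
      (Real.sqrt π : ℂ) * Complex.Gamma ((w - 1) / 2) / Complex.Gamma (w / 2) := by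
  have hpos : ∀ x : ℝ, (0:ℝ) < 1 + x ^ 2 := fun x => by positivity
  set g : ℝ → ℂ := fun x => ((1 + x ^ 2 : ℝ) : ℂ) ^ (-w / 2) with hg
  -- continuity
  have hcont : Continuous g := by
    apply Continuous.cpow (by continuity) continuous_const
    intro x
    exact Complex.ofReal_mem_slitPlane.2 (hpos x)
  -- integrability
  have hre : (-w / 2).re = -w.re / 2 := by
    rw [aux_re_div_two]; simp
  have hint : Integrable g := by
    refine (integrable_rpow_neg_one_add_norm_sq (E := ℝ) (μ := volume) (r := w.re)
      (by simpa using hw)).mono' hcont.aestronglyMeasurable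
      (Filter.Eventually.of_forall fun x => le_of_eq ?_)
    rw [hg]
    simp only
    rw [Complex.norm_cpow_eq_rpow_re_of_pos (hpos x), hre]
    rw [Real.norm_eq_abs, sq_abs]
  refine ⟨hint, ?_⟩
  -- the substitution map
  set f : ℝ → ℝ := fun t => Real.sqrt (t / (1 - t)) with hf
  set F : ℝ → ℝ := fun t => 1 / (2 * Real.sqrt (t / (1 - t)) * (1 - t) ^ 2) with hF
  have hderiv : ∀ t ∈ Ioo (0:ℝ) 1, HasDerivWithinAt f (F t) (Ioo 0 1) t := by
    intro t ht
    have h1t : 0 < 1 - t := by linarith [ht.2]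
    have hq : 0 < t / (1 - t) := div_pos ht.1 h1t
    have hd : HasDerivAt (fun u : ℝ => u / (1 - u)) (1 / (1 - t) ^ 2) t := by
      have h := (hasDerivAt_id t).div ((hasDerivAt_const t (1:ℝ)).sub (hasDerivAt_id t)) h1t.ne'
      convert h using 1 <;> try rfl
      simp only [Pi.sub_apply, id]
      field_simp
      ring
    have h2 := (Real.hasDerivAt_sqrt hq.ne').comp t hd
    refine HasDerivAt.hasDerivWithinAt ?_
    convert h2 using 1 <;> try rfl
    rw [hF]
    simp only [Function.comp]
    have hs : 0 < Real.sqrt (t / (1 - t)) := Real.sqrt_pos.2 hq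
    try field_simp
    try ring
  have hinj : InjOn f (Ioo (0:ℝ) 1) := by
    intro a ha b hb hab
    have h1a : 0 < 1 - a := by linarith [ha.2]
    have h1b : 0 < 1 - b := by linarith [hb.2]
    have hsq : a / (1 - a) = b / (1 - b) := by
      have h := congrArg (fun x : ℝ => x ^ 2) hab
      simpa [hf, Real.sq_sqrt (div_nonneg ha.1.le h1a.le),
        Real.sq_sqrt (div_nonneg hb.1.le h1b.le)] using h
    rw [div_eq_div_iff h1a.ne' h1b.ne'] at hsq
    nlinarith
  have himg : f '' Ioo 0 1 = Ioi (0:ℝ) := by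
    ext x
    constructor
    · rintro ⟨t, ht, rfl⟩
      exact Real.sqrt_pos.2 (div_pos ht.1 (by linarith [ht.2]))
    · intro hx
      have hx : 0 < x := hx
      refine ⟨x ^ 2 / (1 + x ^ 2), ⟨by positivity, ?_⟩, ?_⟩
      · rw [div_lt_one (by positivity)]; nlinarith
      · have h1 : (1:ℝ) - x ^ 2 / (1 + x ^ 2) = 1 / (1 + x ^ 2) := by
          field_simp
          ring
        rw [hf]
        simp only
        rw [h1]
        have h2 : x ^ 2 / (1 + x ^ 2) / (1 / (1 + x ^ 2)) = x ^ 2 := by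
          field_simp
        rw [h2, Real.sqrt_sq hx.le]
  -- evenness
  have heven : ∀ x : ℝ, g (-x) = g x := by
    intro x; simp only [hg, neg_sq]
  have hsplit : ∫ x : ℝ, g x = 2 * ∫ x in Ioi (0:ℝ), g x := by
    rw [← intervalIntegral.integral_Iic_add_Ioi (hint.integrableOn) (hint.integrableOn)]
    have hIic : ∫ x in Iic (0:ℝ), g x = ∫ x in Ioi (0:ℝ), g x := by
      have h := integral_comp_neg_Iic (0:ℝ) g
      rw [neg_zero] at h
      rw [← h]
      exact setIntegral_congr_fun measurableSet_Iic fun x _ => (heven x).symm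
    rw [hIic]; ring
  -- change of variables onto the Beta integral
  have hIoi : ∫ x in Ioi (0:ℝ), g x = ∫ t in Ioo (0:ℝ) 1, |F t| • g (f t) := by
    rw [← himg]
    exact integral_image_eq_integral_abs_deriv_smul measurableSet_Ioo hderiv hinj g
  have hbetaint : ∫ t in Ioo (0:ℝ) 1, |F t| • g (f t)
      = (2⁻¹ : ℂ) * Complex.betaIntegral (1/2) ((w-1)/2) := by
    rw [Complex.betaIntegral, intervalIntegral.integral_of_le zero_le_one,
      integral_Ioc_eq_integral_Ioo, ← integral_const_mul]
    refine setIntegral_congr_fun measurableSet_Ioo fun t ht => ?_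
    have ht0 : 0 < t := ht.1
    have h1t : 0 < 1 - t := by linarith [ht.2]
    have hq : 0 < t / (1 - t) := div_pos ht0 h1t
    have hb0 : ((1 - t : ℝ) : ℂ) ≠ 0 := by exact_mod_cast h1t.ne'
    have harg : ((1 - t : ℝ) : ℂ).arg ≠ π := by
      rw [Complex.arg_ofReal_of_nonneg h1t.le]; exact Real.pi_ne_zero.symm
    -- value of g at f t
    have hft : 1 + f t ^ 2 = (1 - t)⁻¹ := by
      rw [hf]; simp only
      rw [Real.sq_sqrt hq.le]; field_simp; ring
    have hgft : g (f t) = ((1 - t : ℝ) : ℂ) ^ (w / 2) := by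
      rw [hg]; simp only
      rw [hft, Complex.ofReal_inv, Complex.inv_cpow _ _ harg, ← Complex.cpow_neg]
      congr 1
      ring
    -- value of the Jacobian
    have hsqt : Real.sqrt (t / (1 - t)) = t ^ ((1:ℝ)/2) / (1 - t) ^ ((1:ℝ)/2) := by
      rw [Real.sqrt_eq_rpow, Real.div_rpow ht0.le h1t.le]
    have h32 : ((1 - t) ^ (2:ℕ) : ℝ) = (1 - t) ^ ((3:ℝ)/2) * (1 - t) ^ ((1:ℝ)/2) := by
      rw [← Real.rpow_natCast (1 - t) 2, ← Real.rpow_add h1t]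
      norm_num
    have pa : (0:ℝ) < t ^ ((1:ℝ)/2) := Real.rpow_pos_of_pos ht0 _
    have pb : (0:ℝ) < (1 - t) ^ ((1:ℝ)/2) := Real.rpow_pos_of_pos h1t _
    have pc : (0:ℝ) < (1 - t) ^ ((3:ℝ)/2) := Real.rpow_pos_of_pos h1t _
    have hFt : |F t| = 2⁻¹ * (t ^ (-(1/2) : ℝ) * (1 - t) ^ (-(3/2) : ℝ)) := by
      have hpos' : 0 < F t := by
        rw [hF]; simp only
        have hs : 0 < Real.sqrt (t / (1 - t)) := Real.sqrt_pos.2 hq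
        positivity
      rw [abs_of_pos hpos', hF]
      simp only
      rw [hsqt, h32, Real.rpow_neg ht0.le, Real.rpow_neg h1t.le]
      field_simp
    have hb0' : (1 - (t:ℂ)) ≠ 0 := by
      intro h
      apply h1t.ne'
      have := congrArg Complex.re h
      simpa using this
    rw [hgft, hFt, Complex.real_smul]
    push_cast [Complex.ofReal_cpow ht0.le, Complex.ofReal_cpow h1t.le]
    rw [mul_assoc, mul_assoc, ← Complex.cpow_add _ _ hb0']
    rw [show (-(1/2) : ℂ) = 1/2 - 1 by norm_num,
      show (-(3/2) + w/2 : ℂ) = (w-1)/2 - 1 by ring]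
  -- Beta–Gamma relation
  have hu : 0 < ((1:ℂ)/2).re := by norm_num
  have hv : 0 < ((w - 1)/2).re := by
    rw [aux_re_div_two, Complex.sub_re, Complex.one_re]; linarith
  have hΓ : Complex.Gamma (w/2) ≠ 0 :=
    Complex.Gamma_ne_zero_of_re_pos (by rw [aux_re_div_two]; linarith)
  have hGamma_half : Complex.Gamma (1/2) = ((Real.sqrt π : ℝ) : ℂ) := by
    rw [Complex.Gamma_one_half_eq, Real.sqrt_eq_rpow, Complex.ofReal_cpow Real.pi_pos.le]
    norm_num
  have hbeta : Complex.betaIntegral (1/2) ((w-1)/2)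
      = (Real.sqrt π : ℂ) * Complex.Gamma ((w - 1) / 2) / Complex.Gamma (w / 2) := by
    have h := Complex.Gamma_mul_Gamma_eq_betaIntegral hu hv
    rw [show (1:ℂ)/2 + (w-1)/2 = w/2 by ring] at h
    rw [eq_div_iff hΓ, mul_comm, ← h, hGamma_half]
  calc ∫ x : ℝ, g x = 2 * ∫ x in Ioi (0:ℝ), g x := hsplit
    _ = 2 * ((2⁻¹ : ℂ) * Complex.betaIntegral (1/2) ((w-1)/2)) := by rw [hIoi, hbetaint]
    _ = Complex.betaIntegral (1/2) ((w-1)/2) := by ring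
    _ = (Real.sqrt π : ℂ) * Complex.Gamma ((w - 1) / 2) / Complex.Gamma (w / 2) := hbeta
end
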